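/- Let (X, π) be a weighted n-partite simplicial complex and let s = (s(1),…,s(n)) be any ordering of [n]. Then the entropy contraction factor of the sequential sweep satisfies EC(Psq^{(s)}) ≥ ∏_{j=1}^{n−1} η^{s([j+1,n])→s(j)}, where s(A) = {s(a) : a ∈ A}. In particular, for every probability distribution μ on the top faces, D(μ·Psq^{(s)} ‖ π) ≤ (1 − ∏_{j=1}^{n−1} η^{s([j+1,n])→s(j)}) · D(μ ‖ π). -/

import Mathlib

open Finset
open scoped Classical

noncomputable section

namespace PaperFormal

/-- A weighted `n`-partite simplicial complex: a nonempty finite set `Ω` of `n`-tuples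
(the top faces, each tuple picking one element from each side `U i`) together with a
full-support probability distribution `π` on it. -/
structure WPC (n : ℕ) (U : Fin n → Type*) [∀ i, Fintype (U i)] [∀ i, DecidableEq (U i)] where
  Ω : Finset (∀ i, U i)
  nonempty : Ω.Nonempty
  π : (∀ i, U i) → ℝ
  nonneg : ∀ ω, 0 ≤ π ω
  support : ∀ ω, 0 < π ω ↔ ω ∈ Ω
  sum_one : ∑ ω : ∀ i, U i, π ω = 1

/-- Partial assignments to the coordinates in `S`. -/
abbrev PAssign {n : ℕ} (U : Fin n → Type*) (S : Finset (Fin n)) : Type _ :=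
  ∀ i : {x : Fin n // x ∈ S}, U i.1

variable {n : ℕ} {U : Fin n → Type*} [∀ i, Fintype (U i)] [∀ i, DecidableEq (U i)]

/-- Restriction of a tuple to the coordinates in `S`. -/
def restr (S : Finset (Fin n)) (ω : ∀ i, U i) : PAssign U S := fun i => ω i.1

/-- The unique assignment to the empty set of coordinates. -/
def emptyA : PAssign U (∅ : Finset (Fin n)) := fun i => absurd i.2 (Finset.notMem_empty i.1)

/-- Probability of the event `E` under `π`. -/
def pr (X : WPC n U) (E : (∀ i, U i) → Prop) : ℝ :=
  ∑ ω : ∀ i, U i, if E ω then X.π ω else 0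

lemma pr_congr (X : WPC n U) {E F : (∀ i, U i) → Prop} (h : ∀ ω, E ω ↔ F ω) :
    pr X E = pr X F :=
  Finset.sum_congr rfl fun ω _ => if_congr (h ω) rfl rfl

/-- The `S`-marginal of `π`, evaluated at the partial assignment `α`. -/
def marg (X : WPC n U) (S : Finset (Fin n)) (α : PAssign U S) : ℝ :=
  pr X fun ω => restr S ω = α

/-- The pinned marginal `π_T^{(α)}`: the probability that the coordinates in `T` agree
with `β`, conditioned on the coordinates in `S` agreeing with `α`. -/
def cmarg (X : WPC n U) {S T : Finset (Fin n)} (α : PAssign U S) (β : PAssign U T) : ℝ :=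
  pr X (fun ω => restr S ω = α ∧ restr T ω = β) / marg X S α

/-- The colored random walk `C_α^{I → J}`: entry `(τI, τJ)` is
`Pr[ω_J = τJ | ω_I = τI, ω_S = α]`. -/
def Cwalk (X : WPC n U) (S I J : Finset (Fin n)) (α : PAssign U S)
    (τI : PAssign U I) (τJ : PAssign U J) : ℝ :=
  pr X (fun ω => restr S ω = α ∧ restr I ω = τI ∧ restr J ω = τJ) /
    pr X (fun ω => restr S ω = α ∧ restr I ω = τI)

/-- The second largest singular value of a row-stochastic matrix `M` satisfying
`μA M = μB`, with respect to the inner products weighted by `μA` and `μB`, via its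
variational characterization
`σ₂(M) = sup { ⟨f, M g⟩_{μA} : ⟨f,1⟩_{μA} = ⟨g,1⟩_{μB} = 0, ‖f‖_{μA} = ‖g‖_{μB} = 1 }`. -/
def sigma2 {A B : Type*} [Fintype A] [Fintype B]
    (μA : A → ℝ) (μB : B → ℝ) (M : A → B → ℝ) : ℝ :=
  sSup { r : ℝ | ∃ f : A → ℝ, ∃ g : B → ℝ,
    (∑ a, μA a * f a) = 0 ∧ (∑ b, μB b * g b) = 0 ∧
    (∑ a, μA a * f a ^ 2) = 1 ∧ (∑ b, μB b * g b ^ 2) = 1 ∧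
    r = ∑ a, μA a * f a * ∑ b, M a b * g b }

/-- The second largest singular value `σ₂(C_α^{I → J})`, with respect to the inner
products weighted by the pinned marginals `π_I^{(α)}` and `π_J^{(α)}`. -/
def sigma2C (X : WPC n U) (S I J : Finset (Fin n)) (α : PAssign U S) : ℝ :=
  sigma2 (fun τI : PAssign U I => cmarg X α τI) (fun τJ : PAssign U J => cmarg X α τJ)
    (Cwalk X S I J α)

/-- `ε^{I → J}`: the maximum of `σ₂(C_α^{I → J})` over all partial assignments `α`
to the coordinates outside `I ∪ J` (realizable on `Ω`). -/
def epsIJ (X : WPC n U) (I J : Finset (Fin n)) : ℝ :=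
  sSup { r : ℝ | ∃ α : PAssign U (I ∪ J)ᶜ,
    0 < marg X (I ∪ J)ᶜ α ∧ r = sigma2C X (I ∪ J)ᶜ I J α }

/-- `π` is `(ε 0, …, ε (n-2))`-product: for every realizable pinning `α` of a set `S` of at
most `n - 2` coordinates, and all distinct `i, j ∉ S`, `σ₂(C_α^{i → j}) ≤ ε |S|`. -/
def isProduct (X : WPC n U) (ε : ℕ → ℝ) : Prop :=
  ∀ S : Finset (Fin n), S.card ≤ n - 2 → ∀ α : PAssign U S, 0 < marg X S α →
    ∀ i j : Fin n, i ∉ S → j ∉ S → i ≠ j → sigma2C X S {i} {j} α ≤ ε S.card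

/-- The update operator `Q_i`: resample the `i`-th coordinate according to `π`,
conditionally on all the other coordinates. -/
def Qmat (X : WPC n U) (i : Fin n) : Matrix (∀ i, U i) (∀ i, U i) ℝ :=
  Matrix.of fun ω ω' =>
    pr X (fun τ => τ = ω' ∧ restr {i}ᶜ τ = restr {i}ᶜ ω) /
      pr X (fun τ => restr {i}ᶜ τ = restr {i}ᶜ ω)

/-- The sequential sweep `P_seq^{(s)} = Q_{s 0} Q_{s 1} ⋯ Q_{s (n-1)}`. -/
def Psq (X : WPC n U) (s : Equiv.Perm (Fin n)) : Matrix (∀ i, U i) (∀ i, U i) ℝ :=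
  (List.ofFn fun j : Fin n => Qmat X (s j)).prod

/-- The second largest singular value of the sequential sweep, with respect to the
inner product weighted by its stationary distribution `π`. -/
def sigma2P (X : WPC n U) (s : Equiv.Perm (Fin n)) : ℝ :=
  sigma2 X.π X.π fun ω ω' => Psq X s ω ω'

/-- The link graph `G_α` of a pinning `α` of the coordinates in `S`: vertices are pairs
`(i, x)` with `i ∉ S`, and `(i,x)`, `(j,y)` are adjacent when `i ≠ j` and the event
`{ω_i = x, ω_j = y, ω_S = α}` has positive probability. -/
def linkGraph (X : WPC n U) (S : Finset (Fin n)) (α : PAssign U S) :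
    SimpleGraph ((i : Fin n) × U i) where
  Adj v w := v.1 ≠ w.1 ∧ v.1 ∉ S ∧ w.1 ∉ S ∧
    0 < pr X fun ω => restr S ω = α ∧ ω v.1 = v.2 ∧ ω w.1 = w.2
  symm := by
    constructor
    rintro v w ⟨h1, h2, h3, h4⟩
    refine ⟨h1.symm, h3, h2, ?_⟩
    have e : pr X (fun ω => restr S ω = α ∧ ω w.1 = w.2 ∧ ω v.1 = v.2)
        = pr X (fun ω => restr S ω = α ∧ ω v.1 = v.2 ∧ ω w.1 = w.2) :=
      pr_congr X fun ω => by tauto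
    rw [e]; exact h4
  loopless := by constructor; rintro v ⟨h1, -⟩; exact h1 rfl

/-- `(X, π)` is link-connected: in every link graph (of a realizable pinning of at most
`n - 2` coordinates), every two valid vertices are connected by a path. -/
def linkConnected (X : WPC n U) : Prop :=
  ∀ S : Finset (Fin n), S.card ≤ n - 2 → ∀ α : PAssign U S, 0 < marg X S α →
    ∀ v w : (i : Fin n) × U i, v.1 ∉ S → w.1 ∉ S →
      0 < pr X (fun ω => restr S ω = α ∧ ω v.1 = v.2) →
      0 < pr X (fun ω => restr S ω = α ∧ ω w.1 = w.2) →
      (linkGraph X S α).Reachable v w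

/-- The stationary measure of the random walk on the link graph `G_α`. -/
def linkMeas (X : WPC n U) (S : Finset (Fin n)) (α : PAssign U S) :
    (i : Fin n) × U i → ℝ :=
  fun v => if v.1 ∈ S then 0 else
    (1 / ((n : ℝ) - (S.card : ℝ))) *
      (pr X (fun ω => restr S ω = α ∧ ω v.1 = v.2) / marg X S α)

/-- The random walk matrix `M_α` of the link graph `G_α`. -/
def linkWalk (X : WPC n U) (S : Finset (Fin n)) (α : PAssign U S) :
    (i : Fin n) × U i → (i : Fin n) × U i → ℝ :=
  fun v w =>
    if v.1 = w.1 ∨ v.1 ∈ S ∨ w.1 ∈ S then 0 else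
      (1 / ((n : ℝ) - (S.card : ℝ) - 1)) *
        (pr X (fun ω => restr S ω = α ∧ ω v.1 = v.2 ∧ ω w.1 = w.2) /
          pr X (fun ω => restr S ω = α ∧ ω v.1 = v.2))

/-- The second largest eigenvalue of a random walk matrix `M`, self-adjoint with respect
to the probability measure `μ`, via its variational characterization. -/
def lambda2 {A : Type*} [Fintype A] (μ : A → ℝ) (M : A → A → ℝ) : ℝ :=
  sSup { r : ℝ | ∃ f : A → ℝ,
    (∑ a, μ a * f a) = 0 ∧ (∑ a, μ a * f a ^ 2) = 1 ∧
    r = ∑ a, μ a * f a * ∑ b, M a b * f b }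

/-- `(X, π)` is a `(γ 0, …, γ (n-2))`-local spectral expander:
`λ₂(M_α) ≤ γ |S|` for every realizable pinning `α` of at most `n - 2` coordinates. -/
def isLocalExpander (X : WPC n U) (γ : ℕ → ℝ) : Prop :=
  ∀ S : Finset (Fin n), S.card ≤ n - 2 → ∀ α : PAssign U S, 0 < marg X S α →
    lambda2 (linkMeas X S α) (linkWalk X S α) ≤ γ S.card

/-- Kullback–Leibler divergence `D(μ ‖ ν) = Σ_a μ(a) log (μ(a) / ν(a))`. -/
def KL {A : Type*} [Fintype A] (μ ν : A → ℝ) : ℝ :=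
  ∑ a, μ a * Real.log (μ a / ν a)

/-- `μ` is a probability distribution supported on `{a | P a}`. -/
def distOn {A : Type*} [Fintype A] (P : A → Prop) (μ : A → ℝ) : Prop :=
  (∀ a, 0 ≤ μ a) ∧ (∑ a, μ a) = 1 ∧ ∀ a, ¬ P a → μ a = 0

/-- The `(I, J)` entropy contraction parameter `η^{I → J} = 1 - κ^{I → J}`, where
`κ^{I → J}` is the supremum of `D(μ C_α^{I→J} ‖ π_J^{(α)}) / D(μ ‖ π_I^{(α)})` over all
realizable pinnings `α` of the coordinates outside `I ∪ J` and all distributions `μ` on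
the assignments of `I` compatible with `α`. -/
def etaIJ (X : WPC n U) (I J : Finset (Fin n)) : ℝ :=
  1 - sSup { r : ℝ | ∃ α : PAssign U (I ∪ J)ᶜ, 0 < marg X (I ∪ J)ᶜ α ∧
    ∃ μ : PAssign U I → ℝ,
      distOn (fun τ => 0 < pr X fun ω => restr (I ∪ J)ᶜ ω = α ∧ restr I ω = τ) μ ∧
      KL μ (fun τ : PAssign U I => cmarg X α τ) ≠ 0 ∧
      r = KL (fun τJ : PAssign U J => ∑ τI : PAssign U I, μ τI * Cwalk X (I ∪ J)ᶜ I J α τI τJ)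
            (fun τJ : PAssign U J => cmarg X α τJ) /
          KL μ (fun τ : PAssign U I => cmarg X α τ) }

/-- The entropy contraction factor `EC(M) = 1 - sup_μ D(μ M ‖ π) / D(μ ‖ π)` of a random
walk matrix `M` with stationary distribution `π`. -/
def EC (X : WPC n U) (M : Matrix (∀ i, U i) (∀ i, U i) ℝ) : ℝ :=
  1 - sSup { r : ℝ | ∃ μ : (∀ i, U i) → ℝ, distOn (fun ω => ω ∈ X.Ω) μ ∧
    KL μ X.π ≠ 0 ∧ r = KL (Matrix.vecMul μ M) X.π / KL μ X.π }

/-- The `π`-weighted inner product on `ℝ^Ω`. -/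
def ip (X : WPC n U) (f g : {ω // ω ∈ X.Ω} → ℝ) : ℝ :=
  ∑ ω : {ω // ω ∈ X.Ω}, X.π ω.1 * f ω * g ω

/-- The indicator vector `u_α ∈ ℝ^Ω` of the partial assignment `α` to the coordinates
outside `T`. -/
def uvec (X : WPC n U) (T : Finset (Fin n)) (α : PAssign U Tᶜ) : {ω // ω ∈ X.Ω} → ℝ :=
  fun ω => if restr Tᶜ ω.1 = α then 1 else 0

/-- The subspace `U_T = span { u_α : α an assignment to the coordinates outside T }`. -/
def Uspan (X : WPC n U) (T : Finset (Fin n)) : Submodule ℝ ({ω // ω ∈ X.Ω} → ℝ) :=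
  Submodule.span ℝ { f | ∃ α : PAssign U Tᶜ, f = uvec X T α }

/-- The subspace of functions on `Ω` depending only on the coordinates outside `T`. -/
def Uinv (X : WPC n U) (T : Finset (Fin n)) : Submodule ℝ ({ω // ω ∈ X.Ω} → ℝ) where
  carrier := { f | ∀ ω ω' : {ω // ω ∈ X.Ω}, restr Tᶜ ω.1 = restr Tᶜ ω'.1 → f ω = f ω' }
  add_mem' := by
    intro f g hf hg ω ω' h
    simp only [Pi.add_apply, hf ω ω' h, hg ω ω' h]
  zero_mem' := by intro ω ω' h; rfl
  smul_mem' := by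
    intro c f hf ω ω' h
    simp only [Pi.smul_apply, hf ω ω' h]

/-- The orthogonal complement (with respect to `⟨·,·⟩_π`) of a subspace, as a set. -/
def orthC (X : WPC n U) (W : Submodule ℝ ({ω // ω ∈ X.Ω} → ℝ)) :
    Set ({ω // ω ∈ X.Ω} → ℝ) :=
  { f | ∀ g ∈ W, ip X f g = 0 }

/-- The cosine of the angle between two subspaces of `ℝ^Ω`:
`cos(A,B) = sup { ⟨u,v⟩_π : u ∈ A ∩ (A ⊓ B)ᗮ, v ∈ B ∩ (A ⊓ B)ᗮ, ‖u‖_π = ‖v‖_π = 1 }`. -/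
def cosAngle (X : WPC n U) (A B : Submodule ℝ ({ω // ω ∈ X.Ω} → ℝ)) : ℝ :=
  sSup { r : ℝ | ∃ u, u ∈ A ∧ u ∈ orthC X (A ⊓ B) ∧
    ∃ v, v ∈ B ∧ v ∈ orthC X (A ⊓ B) ∧
    ip X u u = 1 ∧ ip X v v = 1 ∧ r = ip X u v }

/-- The update operator `Q_i` as an operator on `ℝ^Ω`. -/
def Qop (X : WPC n U) (i : Fin n) (f : {ω // ω ∈ X.Ω} → ℝ) : {ω // ω ∈ X.Ω} → ℝ :=
  fun ω => ∑ ω' : {ω // ω ∈ X.Ω}, Qmat X i ω.1 ω'.1 * f ω'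

/-- Concatenation of partial assignments on disjoint coordinate sets. -/
def joinAssign {S T : Finset (Fin n)} (β : PAssign U S) (α : PAssign U T) :
    PAssign U (S ∪ T) :=
  fun i => if h : i.1 ∈ S then β ⟨i.1, h⟩
    else α ⟨i.1, (Finset.mem_union.mp i.2).resolve_left h⟩

/-- The `S`-marginal of a (not necessarily normalized) distribution `ν` on tuples. -/
def distMarg (ν : (∀ i, U i) → ℝ) (S : Finset (Fin n)) (a : PAssign U S) : ℝ :=
  ∑ ω : ∀ i, U i, if restr S ω = a then ν ω else 0

/-- The distribution `ν` conditioned on the `i`-th coordinate being `x`. -/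
def condAt (ν : (∀ i, U i) → ℝ) (i : Fin n) (x : U i) : (∀ i, U i) → ℝ :=
  fun ω => if ω i = x then ν ω / (∑ ω' : ∀ i, U i, if ω' i = x then ν ω' else 0) else 0

/-- The influence matrix `Inf_α` of the pinning `α` of the coordinates in `S`:
`Inf_α((i,x),(j,y)) = Pr[ω_j = y | ω_i = x, ω_S = α] - Pr[ω_j = y | ω_S = α]`
for `i ≠ j` outside `S`, and `0` otherwise. -/
def InfMat (X : WPC n U) (S : Finset (Fin n)) (α : PAssign U S) :
    Matrix ((i : Fin n) × U i) ((i : Fin n) × U i) ℝ :=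
  Matrix.of fun v w =>
    if v.1 = w.1 ∨ v.1 ∈ S ∨ w.1 ∈ S then 0 else
      pr X (fun ω => restr S ω = α ∧ ω v.1 = v.2 ∧ ω w.1 = w.2) /
          pr X (fun ω => restr S ω = α ∧ ω v.1 = v.2) -
        pr X (fun ω => restr S ω = α ∧ ω w.1 = w.2) / marg X S α

/-- `π` is `(c 0, …, c (n-2))`-spectrally independent: every (real) eigenvalue of the
influence matrix of a realizable pinning of at most `n - 2` coordinates is at most
`c |S|`. -/
def spectrallyIndependent (X : WPC n U) (c : ℕ → ℝ) : Prop :=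
  ∀ S : Finset (Fin n), S.card ≤ n - 2 → ∀ α : PAssign U S, 0 < marg X S α →
    ∀ r : ℝ,
      (∃ v : ((i : Fin n) × U i) → ℝ, v ≠ 0 ∧ (InfMat X S α).mulVec v = r • v) →
      r ≤ c S.card

end PaperFormal

namespace PaperFormal

variable {n : ℕ} {U : Fin n → Type*} [∀ i, Fintype (U i)] [∀ i, DecidableEq (U i)]


section KLgen
variable {A : Type*} [Fintype A] {B : Type*} [Fintype B]

lemma KL_ge (μ ν : A → ℝ) (hμ : ∀ a, 0 ≤ μ a) (hν : ∀ a, 0 ≤ ν a)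
    (habs : ∀ a, ν a = 0 → μ a = 0) :
    (∑ a, μ a) - (∑ a, ν a) ≤ KL μ ν := by
  rw [KL, ← Finset.sum_sub_distrib]
  apply Finset.sum_le_sum
  intro a _
  rcases eq_or_lt_of_le (hμ a) with h | h
  · rw [← h]; simp [hν a]
  · have hνa : 0 < ν a := lt_of_le_of_ne (hν a) (fun h0 => absurd (habs a h0.symm) (ne_of_gt h))
    have hlog : Real.log (ν a / μ a) ≤ ν a / μ a - 1 :=
      Real.log_le_sub_one_of_pos (div_pos hνa h)
    have : Real.log (μ a / ν a) = - Real.log (ν a / μ a) := by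
      rw [← Real.log_inv, inv_div]
    rw [this]
    have h2 : -(ν a / μ a - 1) ≤ - Real.log (ν a / μ a) := by linarith
    have h3 : μ a * -(ν a / μ a - 1) ≤ μ a * - Real.log (ν a / μ a) :=
      mul_le_mul_of_nonneg_left h2 (le_of_lt h)
    have h4 : μ a * -(ν a / μ a - 1) = μ a - ν a := by
      field_simp
      ring
    linarith

lemma KL_nonneg (μ ν : A → ℝ) (hμ : ∀ a, 0 ≤ μ a) (hν : ∀ a, 0 ≤ ν a)
    (habs : ∀ a, ν a = 0 → μ a = 0) (hsum : (∑ a, ν a) ≤ ∑ a, μ a) :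
    0 ≤ KL μ ν :=
  le_trans (by linarith) (KL_ge μ ν hμ hν habs)

lemma log_sum_ineq (x y : A → ℝ) (hx : ∀ a, 0 ≤ x a) (hy : ∀ a, 0 ≤ y a)
    (habs : ∀ a, y a = 0 → x a = 0) :
    (∑ a, x a) * Real.log ((∑ a, x a) / (∑ a, y a)) ≤ ∑ a, x a * Real.log (x a / y a) := by
  set Xs := ∑ a, x a with hXs
  set Ys := ∑ a, y a with hYs
  rcases eq_or_lt_of_le (Finset.sum_nonneg (fun a _ => hy a)) with hY0 | hY0
  · have hyz : ∀ a, y a = 0 := by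
      intro a
      have := Finset.sum_eq_zero_iff_of_nonneg (fun a _ => hy a) |>.mp hY0.symm
      exact this a (mem_univ a)
    have hxz : ∀ a, x a = 0 := fun a => habs a (hyz a)
    have h1 : Xs = 0 := by rw [hXs]; exact Finset.sum_eq_zero (fun a _ => hxz a)
    have h2 : ∑ a, x a * Real.log (x a / y a) = 0 :=
      Finset.sum_eq_zero (fun a _ => by rw [hxz a]; ring)
    rw [h1, h2]; simp
  · have hYne : Ys ≠ 0 := ne_of_gt hY0
    have hjen := Real.convexOn_mul_log.map_sum_le (t := univ)
      (w := fun a => y a / Ys) (p := fun a => x a / y a)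
      (fun a _ => div_nonneg (hy a) (le_of_lt hY0))
      (by rw [← Finset.sum_div]; field_simp; exact hYs.symm)
      (fun a _ => by
        rcases eq_or_lt_of_le (hy a) with h | h
        · simp [← h, habs a h.symm]
        · exact Set.mem_Ici.mpr (div_nonneg (hx a) (le_of_lt h)))
    have hpt : ∑ a, (y a / Ys) • (x a / y a) = Xs / Ys := by
      rw [hXs, Finset.sum_div]
      apply Finset.sum_congr rfl
      intro a _
      rcases eq_or_lt_of_le (hy a) with h | h
      · simp [← h, habs a h.symm]
      · have : (y a / Ys) • (x a / y a) = (y a / y a) * (x a / Ys) := by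
          simp only [smul_eq_mul]; ring
        rw [this, div_self (ne_of_gt h), one_mul]
    rw [hpt] at hjen
    have hmul := mul_le_mul_of_nonneg_left hjen (le_of_lt hY0)
    calc Xs * Real.log (Xs / Ys) = Ys * (Xs / Ys * Real.log (Xs / Ys)) := by
          have : Ys * (Xs / Ys * Real.log (Xs / Ys))
              = (Ys / Ys) * (Xs * Real.log (Xs / Ys)) := by ring
          rw [this, div_self hYne, one_mul]
      _ ≤ Ys * ∑ a, (y a / Ys) • ((x a / y a) * Real.log (x a / y a)) := hmul
      _ = ∑ a, y a * ((x a / y a) * Real.log (x a / y a)) := by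
          rw [Finset.mul_sum]
          apply Finset.sum_congr rfl
          intro a _
          have : Ys * ((y a / Ys) • ((x a / y a) * Real.log (x a / y a)))
              = (Ys / Ys) * (y a * ((x a / y a) * Real.log (x a / y a))) := by
            simp only [smul_eq_mul]; ring
          rw [this, div_self hYne, one_mul]
      _ = ∑ a, x a * Real.log (x a / y a) := by
          apply Finset.sum_congr rfl
          intro a _
          rcases eq_or_lt_of_le (hy a) with h | h
          · simp [← h, habs a h.symm]
          · have : y a * ((x a / y a) * Real.log (x a / y a))
                = (y a / y a) * (x a * Real.log (x a / y a)) := by ring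
            rw [this, div_self (ne_of_gt h), one_mul]

lemma KL_DPI (μ ν : A → ℝ) (K : A → B → ℝ)
    (hμ : ∀ a, 0 ≤ μ a) (hν : ∀ a, 0 ≤ ν a) (hK : ∀ a b, 0 ≤ K a b)
    (habs : ∀ a, ν a = 0 → μ a = 0)
    (hrow : ∀ a, ν a ≠ 0 → ∑ b, K a b = 1) :
    KL (fun b => ∑ a, μ a * K a b) (fun b => ∑ a, ν a * K a b) ≤ KL μ ν := by
  have step1 : KL (fun b => ∑ a, μ a * K a b) (fun b => ∑ a, ν a * K a b)
      ≤ ∑ b, ∑ a, (μ a * K a b) * Real.log ((μ a * K a b) / (ν a * K a b)) := by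
    rw [KL]
    apply Finset.sum_le_sum
    intro b _
    exact log_sum_ineq (fun a => μ a * K a b) (fun a => ν a * K a b)
      (fun a => mul_nonneg (hμ a) (hK a b)) (fun a => mul_nonneg (hν a) (hK a b))
      (fun a h => by
        have h' : ν a * K a b = 0 := h
        show μ a * K a b = 0
        rcases mul_eq_zero.mp h' with h | h
        · rw [habs a h]; ring
        · rw [h]; ring)
  refine le_trans step1 ?_
  rw [Finset.sum_comm, KL]
  apply Finset.sum_le_sum
  intro a _
  rcases eq_or_lt_of_le (hμ a) with h | h
  · simp [← h]
  · have hνa : ν a ≠ 0 := fun h0 => absurd (habs a h0) (ne_of_gt h)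
    have : ∀ b, (μ a * K a b) * Real.log ((μ a * K a b) / (ν a * K a b))
        = K a b * (μ a * Real.log (μ a / ν a)) := by
      intro b
      rcases eq_or_lt_of_le (hK a b) with hKb | hKb
      · simp [← hKb]
      · have : (μ a * K a b) / (ν a * K a b) = μ a / ν a := by
          rw [mul_div_mul_right _ _ (ne_of_gt hKb)]
        rw [this]; ring
    rw [Finset.sum_congr rfl (fun b _ => this b), ← Finset.sum_mul, hrow a hνa, one_mul]

end KLgen


section Plumb
variable {n : ℕ} {U : Fin n → Type*} [∀ i, Fintype (U i)] [∀ i, DecidableEq (U i)]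

lemma ite_eq_ite {p q : Prop} (h : p ↔ q) (dp : Decidable p) (dq : Decidable q) (x y : ℝ) :
    (@ite _ p dp x y) = @ite _ q dq x y := by
  rcases em p with hp | hp
  · rw [if_pos hp, if_pos (h.mp hp)]
  · rw [if_neg hp, if_neg (fun hq => hp (h.mpr hq))]

lemma restr_eq_iff {S : Finset (Fin n)} {ω ω' : ∀ i, U i} :
    restr S ω = restr S ω' ↔ ∀ k, k ∈ S → ω k = ω' k := by
  constructor
  · intro h k hk; exact congrFun h ⟨k, hk⟩
  · intro h; funext k; exact h k.1 k.2

lemma restr_empty (ω : ∀ i, U i) (a : PAssign U (∅ : Finset (Fin n))) : restr ∅ ω = a := by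
  funext k; exact absurd k.2 (Finset.notMem_empty k.1)

/-- restriction of a partial assignment to a smaller set -/
def restr2 {S T : Finset (Fin n)} (h : S ⊆ T) (b : PAssign U T) : PAssign U S :=
  fun k => b ⟨k.1, h k.2⟩

lemma restr2_restr {S T : Finset (Fin n)} (h : S ⊆ T) (ω : ∀ i, U i) :
    restr2 h (restr T ω) = restr S ω := rfl

lemma sum_fiber (S : Finset (Fin n)) (f : (∀ i, U i) → ℝ) :
    ∑ ω : ∀ i, U i, f ω
      = ∑ a : PAssign U S, ∑ ω : ∀ i, U i, if restr S ω = a then f ω else 0 := by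
  rw [Finset.sum_comm]
  apply Finset.sum_congr rfl
  intro ω _
  simp [Finset.sum_ite_eq]

/-- joint (unnormalized) mass of a pair of partial assignments -/
def jointd (ν : (∀ i, U i) → ℝ) (A B : Finset (Fin n)) (α : PAssign U A) (τ : PAssign U B) : ℝ :=
  ∑ ω : ∀ i, U i, if restr A ω = α ∧ restr B ω = τ then ν ω else 0

lemma distMarg_nonneg (ν : (∀ i, U i) → ℝ) (h : ∀ ω, 0 ≤ ν ω) (S : Finset (Fin n))
    (a : PAssign U S) : 0 ≤ distMarg ν S a := by
  apply Finset.sum_nonneg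
  intro ω _
  split_ifs
  · exact h ω
  · exact le_refl 0

lemma jointd_nonneg (ν : (∀ i, U i) → ℝ) (h : ∀ ω, 0 ≤ ν ω) (A B : Finset (Fin n))
    (α : PAssign U A) (τ : PAssign U B) : 0 ≤ jointd ν A B α τ := by
  apply Finset.sum_nonneg
  intro ω _
  split_ifs
  · exact h ω
  · exact le_refl 0

lemma exists_of_distMarg_ne (ν : (∀ i, U i) → ℝ) {S : Finset (Fin n)} {a : PAssign U S}
    (h : distMarg ν S a ≠ 0) : ∃ ω, restr S ω = a ∧ ν ω ≠ 0 := by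
  obtain ⟨ω, -, hω⟩ := Finset.exists_ne_zero_of_sum_ne_zero h
  by_cases hr : restr S ω = a
  · exact ⟨ω, hr, by simpa [hr] using hω⟩
  · exact absurd (by simp [hr]) hω

lemma exists_of_jointd_ne (ν : (∀ i, U i) → ℝ) {A B : Finset (Fin n)} {α : PAssign U A}
    {τ : PAssign U B} (h : jointd ν A B α τ ≠ 0) :
    ∃ ω, restr A ω = α ∧ restr B ω = τ ∧ ν ω ≠ 0 := by
  obtain ⟨ω, -, hω⟩ := Finset.exists_ne_zero_of_sum_ne_zero h
  by_cases hr : restr A ω = α ∧ restr B ω = τ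
  · exact ⟨ω, hr.1, hr.2, by simpa [hr.1, hr.2] using hω⟩
  · exact absurd (by simp [if_neg hr]) hω

lemma distMarg_pos_of (ν : (∀ i, U i) → ℝ) (hν0 : ∀ ω, 0 ≤ ν ω) {S : Finset (Fin n)}
    {a : PAssign U S} {ω : ∀ i, U i} (hω : restr S ω = a) (h : 0 < ν ω) :
    0 < distMarg ν S a := by
  refine lt_of_lt_of_le ?_ (Finset.single_le_sum (f := fun ω' => if restr S ω' = a then ν ω' else 0)
    (fun ω' _ => by split_ifs; exacts [hν0 ω', le_refl 0]) (Finset.mem_univ ω))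
  rw [if_pos hω]; exact h

lemma jointd_pos_of (ν : (∀ i, U i) → ℝ) (hν0 : ∀ ω, 0 ≤ ν ω) {A B : Finset (Fin n)}
    {α : PAssign U A} {τ : PAssign U B} {ω : ∀ i, U i}
    (h1 : restr A ω = α) (h2 : restr B ω = τ) (h : 0 < ν ω) :
    0 < jointd ν A B α τ := by
  refine lt_of_lt_of_le ?_ (Finset.single_le_sum
    (f := fun ω' => if restr A ω' = α ∧ restr B ω' = τ then ν ω' else 0)
    (fun ω' _ => by split_ifs; exacts [hν0 ω', le_refl 0]) (Finset.mem_univ ω))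
  rw [if_pos ⟨h1, h2⟩]; exact h

lemma sum_jointd (ν : (∀ i, U i) → ℝ) (A B : Finset (Fin n)) (α : PAssign U A) :
    ∑ τ : PAssign U B, jointd ν A B α τ = distMarg ν A α := by
  unfold jointd distMarg
  rw [Finset.sum_comm]
  apply Finset.sum_congr rfl
  intro ω _
  by_cases hA : restr A ω = α
  · simp [hA, Finset.sum_ite_eq]
  · simp [hA]

lemma jointd_le_distMarg (ν : (∀ i, U i) → ℝ) (hν0 : ∀ ω, 0 ≤ ν ω) (A B : Finset (Fin n))
    (α : PAssign U A) (τ : PAssign U B) : jointd ν A B α τ ≤ distMarg ν A α := by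
  apply Finset.sum_le_sum
  intro ω _
  split_ifs with h1 h2
  · exact le_refl _
  · exact absurd h1.1 h2
  · exact hν0 ω
  · exact le_refl 0

lemma jointd_eq_distMarg_union (ν : (∀ i, U i) → ℝ) (A B : Finset (Fin n)) (ω : ∀ i, U i) :
    jointd ν A B (restr A ω) (restr B ω) = distMarg ν (A ∪ B) (restr (A ∪ B) ω) := by
  unfold jointd distMarg
  apply Finset.sum_congr rfl
  intro ω' _
  refine ite_eq_ite ?_ _ _ _ _
  constructor
  · rintro ⟨h1, h2⟩
    rw [restr_eq_iff] at h1 h2 ⊢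
    intro k hk
    rcases Finset.mem_union.mp hk with hk | hk
    exacts [h1 k hk, h2 k hk]
  · intro h
    rw [restr_eq_iff] at h
    constructor <;> rw [restr_eq_iff] <;> intro k hk
    exacts [h k (Finset.mem_union_left _ hk), h k (Finset.mem_union_right _ hk)]

lemma distMarg_congr (ν : (∀ i, U i) → ℝ) {S T : Finset (Fin n)} (h : S = T) (ω : ∀ i, U i) :
    distMarg ν S (restr S ω) = distMarg ν T (restr T ω) := by subst h; rfl

lemma KL_distMarg_congr (ν ρ : (∀ i, U i) → ℝ) {S T : Finset (Fin n)} (h : S = T) :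
    KL (distMarg ν S) (distMarg ρ S) = KL (distMarg ν T) (distMarg ρ T) := by subst h; rfl

end Plumb

section WPCfacts
variable {n : ℕ} {U : Fin n → Type*} [∀ i, Fintype (U i)] [∀ i, DecidableEq (U i)]
variable (X : WPC n U)

lemma marg_eq_distMarg (S : Finset (Fin n)) (a : PAssign U S) :
    marg X S a = distMarg X.π S a := by
  unfold marg pr distMarg
  apply Finset.sum_congr rfl
  intro ω _
  exact ite_eq_ite Iff.rfl _ _ _ _

lemma pr_eq_jointd (A B : Finset (Fin n)) (α : PAssign U A) (τ : PAssign U B) :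
    pr X (fun ω => restr A ω = α ∧ restr B ω = τ) = jointd X.π A B α τ := by
  unfold pr jointd
  apply Finset.sum_congr rfl
  intro ω _
  exact ite_eq_ite Iff.rfl _ _ _ _

lemma pr_nonneg (E : (∀ i, U i) → Prop) : 0 ≤ pr X E := by
  apply Finset.sum_nonneg
  intro ω _
  split_ifs
  · exact X.nonneg ω
  · exact le_refl 0

lemma pr_pos_of (E : (∀ i, U i) → Prop) {ω : ∀ i, U i} (hE : E ω) (h : 0 < X.π ω) :
    0 < pr X E := by
  refine lt_of_lt_of_le ?_ (Finset.single_le_sum (f := fun ω' => if E ω' then X.π ω' else 0)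
    (fun ω' _ => by split_ifs; exacts [X.nonneg ω', le_refl 0]) (Finset.mem_univ ω))
  rw [if_pos hE]; exact h

lemma pr_single (P : (∀ i, U i) → Prop) (ω0 : ∀ i, U i) :
    pr X (fun τ => τ = ω0 ∧ P τ) = if P ω0 then X.π ω0 else 0 := by
  unfold pr
  rw [Finset.sum_eq_single ω0]
  · exact ite_eq_ite (and_iff_right rfl) _ _ _ _
  · intro b _ hb; rw [if_neg]; rintro ⟨h1, h2⟩; exact hb h1
  · intro h; exact absurd (Finset.mem_univ ω0) h

lemma vecMul_Qmat_apply (ν : (∀ i, U i) → ℝ) (i : Fin n) (ω : ∀ i, U i) :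
    Matrix.vecMul ν (Qmat X i) ω
      = X.π ω * distMarg ν {i}ᶜ (restr {i}ᶜ ω) / marg X {i}ᶜ (restr {i}ᶜ ω) := by
  have hQ : ∀ ω' : ∀ i, U i, Qmat X i ω' ω
      = (if restr {i}ᶜ ω = restr {i}ᶜ ω' then X.π ω else 0)
          / marg X {i}ᶜ (restr {i}ᶜ ω') := by
    intro ω'
    show pr X (fun τ => τ = ω ∧ restr {i}ᶜ τ = restr {i}ᶜ ω')
        / pr X (fun τ => restr {i}ᶜ τ = restr {i}ᶜ ω') = _
    rw [pr_single]
    exact congrArg₂ (· / ·) (ite_eq_ite Iff.rfl _ _ _ _) rfl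
  have hvm : Matrix.vecMul ν (Qmat X i) ω = ∑ ω', ν ω' * Qmat X i ω' ω := by
    simp [Matrix.vecMul, dotProduct]
  rw [hvm]
  have : ∀ ω' : ∀ i, U i, ν ω' * Qmat X i ω' ω
      = (if restr {i}ᶜ ω' = restr {i}ᶜ ω then ν ω' else 0)
          * (X.π ω / marg X {i}ᶜ (restr {i}ᶜ ω)) := by
    intro ω'
    rw [hQ ω']
    by_cases h : restr {i}ᶜ ω' = restr {i}ᶜ ω
    · rw [if_pos h.symm, if_pos h, h]
    · rw [if_neg (fun he => h he.symm), if_neg h]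
      simp
  rw [Finset.sum_congr rfl (fun ω' _ => this ω'), ← Finset.sum_mul]
  show distMarg ν {i}ᶜ (restr {i}ᶜ ω) * _ = _
  ring

lemma distMarg_subset (ν : (∀ i, U i) → ℝ) {S T : Finset (Fin n)} (hST : S ⊆ T)
    (a : PAssign U S) :
    distMarg ν S a = ∑ b : PAssign U T, if restr2 hST b = a then distMarg ν T b else 0 := by
  have : ∀ b : PAssign U T, (if restr2 hST b = a then distMarg ν T b else 0)
      = ∑ ω, if restr T ω = b ∧ restr2 hST b = a then ν ω else 0 := by
    intro b
    by_cases h : restr2 hST b = a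
    · rw [if_pos h]
      unfold distMarg
      exact Finset.sum_congr rfl (fun ω _ => ite_eq_ite (and_iff_left h).symm _ _ _ _)
    · rw [if_neg h]
      exact (Finset.sum_eq_zero (fun ω _ => if_neg (fun hc => h hc.2))).symm
  rw [Finset.sum_congr rfl (fun b _ => this b), Finset.sum_comm]
  unfold distMarg
  apply Finset.sum_congr rfl
  intro ω _
  have : ∀ b : PAssign U T, (if restr T ω = b ∧ restr2 hST b = a then ν ω else 0)
      = if restr T ω = b then (if restr2 hST b = a then ν ω else 0) else 0 := by
    intro b
    by_cases h : restr T ω = b <;> simp [h]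
  rw [Finset.sum_congr rfl (fun b _ => this b), Finset.sum_ite_eq]
  simp only [Finset.mem_univ, if_true]
  rw [restr2_restr]


end WPCfacts

section WPCfacts2
variable {n : ℕ} {U : Fin n → Type*} [∀ i, Fintype (U i)] [∀ i, DecidableEq (U i)]
variable (X : WPC n U)

lemma pr_eq_sum (P : (∀ i, U i) → Prop) : pr X P = ∑ ω, if P ω then X.π ω else 0 := rfl

lemma distMarg_compl_vecMul (ν : (∀ i, U i) → ℝ) (hν0 : ∀ ω, 0 ≤ ν ω)
    (habs : ∀ ω, ν ω ≠ 0 → X.π ω ≠ 0) (i : Fin n) :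
    distMarg (Matrix.vecMul ν (Qmat X i)) {i}ᶜ = distMarg ν {i}ᶜ := by
  funext b
  show (∑ ω, if restr {i}ᶜ ω = b then Matrix.vecMul ν (Qmat X i) ω else 0) = _
  have hterm : ∀ ω, (if restr {i}ᶜ ω = b then Matrix.vecMul ν (Qmat X i) ω else 0)
      = (if restr {i}ᶜ ω = b then X.π ω else 0)
          * (distMarg ν {i}ᶜ b / distMarg X.π {i}ᶜ b) := by
    intro ω
    by_cases h : restr {i}ᶜ ω = b
    · rw [if_pos h, if_pos h, vecMul_Qmat_apply, h, marg_eq_distMarg, mul_div_assoc]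
    · rw [if_neg h, if_neg h]; ring
  rw [Finset.sum_congr rfl (fun ω _ => hterm ω), ← Finset.sum_mul]
  have hp : (∑ ω, if restr {i}ᶜ ω = b then X.π ω else 0) = distMarg X.π {i}ᶜ b := rfl
  rw [hp]
  by_cases h0 : distMarg X.π {i}ᶜ b = 0
  · have hm0 : distMarg ν {i}ᶜ b = 0 := by
      by_contra hm
      obtain ⟨ω, hω, hνω⟩ := exists_of_distMarg_ne ν hm
      have hπω : 0 < X.π ω := lt_of_le_of_ne (X.nonneg ω) (Ne.symm (habs ω hνω))
      exact absurd h0 (ne_of_gt (distMarg_pos_of X.π X.nonneg hω hπω))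
    rw [h0, hm0]; ring
  · rw [mul_comm, div_mul_cancel₀ _ h0]

lemma distMarg_vecMul_Qmat (ν : (∀ i, U i) → ℝ) (hν0 : ∀ ω, 0 ≤ ν ω)
    (habs : ∀ ω, ν ω ≠ 0 → X.π ω ≠ 0) (i : Fin n) (S : Finset (Fin n)) (hS : i ∉ S) :
    distMarg (Matrix.vecMul ν (Qmat X i)) S = distMarg ν S := by
  have hsub : S ⊆ {i}ᶜ := by
    intro k hk
    simp only [Finset.mem_compl, Finset.mem_singleton]
    rintro rfl; exact hS hk
  funext a
  rw [distMarg_subset (Matrix.vecMul ν (Qmat X i)) hsub, distMarg_subset ν hsub,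
    distMarg_compl_vecMul X ν hν0 habs i]

lemma sum_vecMul_Qmat (ν : (∀ i, U i) → ℝ) (hν0 : ∀ ω, 0 ≤ ν ω)
    (habs : ∀ ω, ν ω ≠ 0 → X.π ω ≠ 0) (i : Fin n) :
    ∑ ω, Matrix.vecMul ν (Qmat X i) ω = ∑ ω, ν ω := by
  have h1 : ∀ ρ : (∀ i, U i) → ℝ, ∑ ω, ρ ω = distMarg ρ ∅ emptyA := by
    intro ρ
    exact (Finset.sum_congr rfl (fun ω _ => by rw [if_pos (restr_empty ω emptyA)])).symm
  rw [h1, h1, distMarg_vecMul_Qmat X ν hν0 habs i ∅ (Finset.notMem_empty i)]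

lemma vecMul_Qmat_nonneg (ν : (∀ i, U i) → ℝ) (hν0 : ∀ ω, 0 ≤ ν ω) (i : Fin n)
    (ω : ∀ i, U i) : 0 ≤ Matrix.vecMul ν (Qmat X i) ω := by
  rw [vecMul_Qmat_apply, marg_eq_distMarg]
  exact div_nonneg (mul_nonneg (X.nonneg ω) (distMarg_nonneg ν hν0 _ _))
    (distMarg_nonneg X.π X.nonneg _ _)

lemma vecMul_Qmat_abs (ν : (∀ i, U i) → ℝ) (i : Fin n) (ω : ∀ i, U i)
    (h : Matrix.vecMul ν (Qmat X i) ω ≠ 0) : X.π ω ≠ 0 := by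
  rw [vecMul_Qmat_apply] at h
  intro h0; rw [h0] at h; simp at h

lemma KL_vecMul_Qmat (ν : (∀ i, U i) → ℝ) (hν0 : ∀ ω, 0 ≤ ν ω)
    (habs : ∀ ω, ν ω ≠ 0 → X.π ω ≠ 0) (i : Fin n) :
    KL (Matrix.vecMul ν (Qmat X i)) X.π
      = KL (distMarg ν {i}ᶜ) (distMarg X.π {i}ᶜ) := by
  rw [KL, sum_fiber ({i}ᶜ) _, KL]
  apply Finset.sum_congr rfl
  intro b _
  set m := distMarg ν {i}ᶜ b with hm
  set p := distMarg X.π {i}ᶜ b with hp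
  have hterm : ∀ ω, (if restr {i}ᶜ ω = b then Matrix.vecMul ν (Qmat X i) ω
        * Real.log (Matrix.vecMul ν (Qmat X i) ω / X.π ω) else 0)
      = (if restr {i}ᶜ ω = b then X.π ω * (m / p)
            * Real.log ((X.π ω * (m / p)) / X.π ω) else 0) := by
    intro ω
    by_cases h : restr {i}ᶜ ω = b
    · rw [if_pos h, if_pos h, vecMul_Qmat_apply, h, marg_eq_distMarg, ← hm, ← hp, mul_div_assoc]
    · rw [if_neg h, if_neg h]
  rw [Finset.sum_congr rfl (fun ω _ => hterm ω)]
  by_cases hm0 : m = 0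
  · rw [hm0]
    simp
  · have hp0 : p ≠ 0 := by
      obtain ⟨ω, hω, hνω⟩ := exists_of_distMarg_ne ν hm0
      have hπω : 0 < X.π ω := lt_of_le_of_ne (X.nonneg ω) (Ne.symm (habs ω hνω))
      exact ne_of_gt (distMarg_pos_of X.π X.nonneg hω hπω)
    have hterm2 : ∀ ω, (if restr {i}ᶜ ω = b then X.π ω * (m / p)
          * Real.log ((X.π ω * (m / p)) / X.π ω) else 0)
        = (if restr {i}ᶜ ω = b then X.π ω else 0) * ((m / p) * Real.log (m / p)) := by
      intro ω
      by_cases h : restr {i}ᶜ ω = b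
      · rw [if_pos h, if_pos h]
        by_cases hπ : X.π ω = 0
        · rw [hπ]; ring
        · rw [mul_comm (X.π ω) (m / p), mul_div_assoc, div_self hπ, mul_one]
          ring
      · rw [if_neg h, if_neg h]; ring
    rw [Finset.sum_congr rfl (fun ω _ => hterm2 ω), ← Finset.sum_mul]
    have hps : (∑ ω, if restr {i}ᶜ ω = b then X.π ω else 0) = p := rfl
    rw [hps, ← mul_assoc, mul_comm p (m / p), div_mul_cancel₀ _ hp0]

lemma KL_marg_as_sum (ν ρ : (∀ i, U i) → ℝ) (S : Finset (Fin n)) :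
    KL (distMarg ν S) (distMarg ρ S)
      = ∑ ω, ν ω * Real.log (distMarg ν S (restr S ω) / distMarg ρ S (restr S ω)) := by
  rw [KL]
  have key : ∀ a : PAssign U S, distMarg ν S a * Real.log (distMarg ν S a / distMarg ρ S a)
      = ∑ ω, if restr S ω = a then
          ν ω * Real.log (distMarg ν S (restr S ω) / distMarg ρ S (restr S ω)) else 0 := by
    intro a
    have h1 : ∀ ω, (if restr S ω = a then
          ν ω * Real.log (distMarg ν S (restr S ω) / distMarg ρ S (restr S ω)) else 0)
        = (if restr S ω = a then ν ω else 0)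
            * Real.log (distMarg ν S a / distMarg ρ S a) := by
      intro ω
      by_cases h : restr S ω = a
      · rw [if_pos h, if_pos h, h]
      · rw [if_neg h, if_neg h]; ring
    rw [Finset.sum_congr rfl (fun ω _ => h1 ω), ← Finset.sum_mul]
    rfl
  rw [Finset.sum_congr rfl (fun a _ => key a), ← sum_fiber S _]

lemma sum_fiber2 (A B : Finset (Fin n)) (f : (∀ i, U i) → ℝ) :
    ∑ α : PAssign U A, ∑ τ : PAssign U B,
        ∑ ω, (if restr A ω = α ∧ restr B ω = τ then f ω else 0)
      = ∑ ω, f ω := by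
  have key : ∀ α : PAssign U A, ∑ τ : PAssign U B,
      ∑ ω, (if restr A ω = α ∧ restr B ω = τ then f ω else 0)
        = ∑ ω, if restr A ω = α then f ω else 0 := by
    intro α
    rw [Finset.sum_comm]
    apply Finset.sum_congr rfl
    intro ω _
    by_cases h : restr A ω = α
    · simp [h, Finset.sum_ite_eq]
    · simp [h]
  rw [Finset.sum_congr rfl (fun α _ => key α), ← sum_fiber A f]

lemma cond_term_as_sum (ν ρ : (∀ i, U i) → ℝ) (hν0 : ∀ ω, 0 ≤ ν ω) (A B : Finset (Fin n)) :
    ∑ α : PAssign U A, distMarg ν A α *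
        KL (fun τ : PAssign U B => jointd ν A B α τ / distMarg ν A α)
           (fun τ : PAssign U B => jointd ρ A B α τ / distMarg ρ A α)
      = ∑ ω, ν ω * Real.log
          ((jointd ν A B (restr A ω) (restr B ω) / distMarg ν A (restr A ω))
            / (jointd ρ A B (restr A ω) (restr B ω) / distMarg ρ A (restr A ω))) := by
  have step1 : ∀ α : PAssign U A, distMarg ν A α *
      KL (fun τ : PAssign U B => jointd ν A B α τ / distMarg ν A α)
         (fun τ : PAssign U B => jointd ρ A B α τ / distMarg ρ A α)
      = ∑ τ : PAssign U B, jointd ν A B α τ * Real.log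
          ((jointd ν A B α τ / distMarg ν A α) / (jointd ρ A B α τ / distMarg ρ A α)) := by
    intro α
    rw [KL, Finset.mul_sum]
    apply Finset.sum_congr rfl
    intro τ _
    by_cases hmα : distMarg ν A α = 0
    · have hJ : jointd ν A B α τ = 0 :=
        le_antisymm (hmα ▸ jointd_le_distMarg ν hν0 A B α τ) (jointd_nonneg ν hν0 A B α τ)
      rw [hmα, hJ]; ring
    · have : distMarg ν A α * (jointd ν A B α τ / distMarg ν A α * Real.log
          ((jointd ν A B α τ / distMarg ν A α) / (jointd ρ A B α τ / distMarg ρ A α)))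
          = (distMarg ν A α / distMarg ν A α) * (jointd ν A B α τ * Real.log
          ((jointd ν A B α τ / distMarg ν A α) / (jointd ρ A B α τ / distMarg ρ A α))) := by
        ring
      rw [this, div_self hmα, one_mul]
  rw [Finset.sum_congr rfl (fun α _ => step1 α)]
  rw [← sum_fiber2 A B (fun ω => ν ω * Real.log
      ((jointd ν A B (restr A ω) (restr B ω) / distMarg ν A (restr A ω))
        / (jointd ρ A B (restr A ω) (restr B ω) / distMarg ρ A (restr A ω))))]
  apply Finset.sum_congr rfl
  intro α _
  apply Finset.sum_congr rfl
  intro τ _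
  have h2 : ∀ ω, (if restr A ω = α ∧ restr B ω = τ then ν ω * Real.log
        ((jointd ν A B (restr A ω) (restr B ω) / distMarg ν A (restr A ω))
          / (jointd ρ A B (restr A ω) (restr B ω) / distMarg ρ A (restr A ω))) else 0)
      = (if restr A ω = α ∧ restr B ω = τ then ν ω else 0) * Real.log
          ((jointd ν A B α τ / distMarg ν A α) / (jointd ρ A B α τ / distMarg ρ A α)) := by
    intro ω
    by_cases h : restr A ω = α ∧ restr B ω = τ
    · rw [if_pos h, if_pos h, h.1, h.2]
    · rw [if_neg h, if_neg h]; ring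
  rw [Finset.sum_congr rfl (fun ω _ => h2 ω), ← Finset.sum_mul]
  rfl

lemma KL_chain (ν : (∀ i, U i) → ℝ) (hν0 : ∀ ω, 0 ≤ ν ω)
    (habs : ∀ ω, ν ω ≠ 0 → X.π ω ≠ 0)
    (A B C : Finset (Fin n)) (hC : C = A ∪ B) :
    KL (distMarg ν C) (distMarg X.π C)
      = KL (distMarg ν A) (distMarg X.π A)
        + ∑ α : PAssign U A, distMarg ν A α *
            KL (fun τ : PAssign U B => jointd ν A B α τ / distMarg ν A α)
               (fun τ : PAssign U B => jointd X.π A B α τ / distMarg X.π A α) := by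
  subst hC
  rw [KL_marg_as_sum, KL_marg_as_sum, cond_term_as_sum ν X.π hν0 A B,
    ← Finset.sum_add_distrib]
  apply Finset.sum_congr rfl
  intro ω _
  by_cases hν : ν ω = 0
  · rw [hν]; ring
  · have hνpos : 0 < ν ω := lt_of_le_of_ne (hν0 ω) (Ne.symm hν)
    have hπ : 0 < X.π ω := lt_of_le_of_ne (X.nonneg ω) (Ne.symm (habs ω hν))
    have hmA : 0 < distMarg ν A (restr A ω) := distMarg_pos_of ν hν0 rfl hνpos
    have hpA : 0 < distMarg X.π A (restr A ω) := distMarg_pos_of X.π X.nonneg rfl hπ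
    have hJν : 0 < jointd ν A B (restr A ω) (restr B ω) := jointd_pos_of ν hν0 rfl rfl hνpos
    have hJπ : 0 < jointd X.π A B (restr A ω) (restr B ω) :=
      jointd_pos_of X.π X.nonneg rfl rfl hπ
    have hMU : 0 < distMarg ν (A ∪ B) (restr (A ∪ B) ω) := by
      rw [← jointd_eq_distMarg_union]; exact hJν
    have hPU : 0 < distMarg X.π (A ∪ B) (restr (A ∪ B) ω) := by
      rw [← jointd_eq_distMarg_union]; exact hJπ
    rw [← mul_add]
    congr 1
    rw [jointd_eq_distMarg_union ν, jointd_eq_distMarg_union X.π]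
    rw [← Real.log_mul (ne_of_gt (div_pos hmA hpA))
      (ne_of_gt (div_pos (div_pos hMU hmA) (div_pos hPU hpA)))]
    congr 1
    rw [div_mul_div_comm]
    rw [mul_comm (distMarg ν A (restr A ω))
        (distMarg ν (A ∪ B) (restr (A ∪ B) ω) / distMarg ν A (restr A ω)),
      div_mul_cancel₀ _ (ne_of_gt hmA),
      mul_comm (distMarg X.π A (restr A ω))
        (distMarg X.π (A ∪ B) (restr (A ∪ B) ω) / distMarg X.π A (restr A ω)),
      div_mul_cancel₀ _ (ne_of_gt hpA)]

lemma jointd_vecMul_Qmat (ν : (∀ i, U i) → ℝ) (i : Fin n) (A I : Finset (Fin n))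
    (hAI : ({i}ᶜ : Finset (Fin n)) = A ∪ I) (α : PAssign U A) (τ : PAssign U ({i} : Finset (Fin n))) :
    jointd (Matrix.vecMul ν (Qmat X i)) A {i} α τ
      = ∑ τI : PAssign U I, jointd ν A I α τI
          * (pr X (fun ω => restr A ω = α ∧ restr I ω = τI ∧ restr {i} ω = τ)
              / jointd X.π A I α τI) := by
  have hform : ∀ ω : ∀ i, U i, Matrix.vecMul ν (Qmat X i) ω
      = X.π ω * (jointd ν A I (restr A ω) (restr I ω) / jointd X.π A I (restr A ω) (restr I ω)) := by
    intro ω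
    rw [vecMul_Qmat_apply, marg_eq_distMarg, distMarg_congr ν hAI ω, distMarg_congr X.π hAI ω,
      ← jointd_eq_distMarg_union, ← jointd_eq_distMarg_union, mul_div_assoc]
  show (∑ ω, if restr A ω = α ∧ restr {i} ω = τ then Matrix.vecMul ν (Qmat X i) ω else 0) = _
  rw [sum_fiber I (fun ω => if restr A ω = α ∧ restr {i} ω = τ then Matrix.vecMul ν (Qmat X i) ω else 0)]
  apply Finset.sum_congr rfl
  intro τI _
  have hterm : ∀ ω, (if restr I ω = τI then
        (if restr A ω = α ∧ restr {i} ω = τ then Matrix.vecMul ν (Qmat X i) ω else 0) else 0)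
      = (if restr A ω = α ∧ restr I ω = τI ∧ restr {i} ω = τ then X.π ω else 0)
          * (jointd ν A I α τI / jointd X.π A I α τI) := by
    intro ω
    by_cases hc : restr A ω = α ∧ restr I ω = τI ∧ restr {i} ω = τ
    · rw [if_pos hc.2.1, if_pos ⟨hc.1, hc.2.2⟩, if_pos hc, hform ω, hc.1, hc.2.1]
    · rcases em (restr I ω = τI) with hI | hI
      · rcases em (restr A ω = α ∧ restr {i} ω = τ) with hAi | hAi
        · exact absurd ⟨hAi.1, hI, hAi.2⟩ hc
        · rw [if_pos hI, if_neg hAi, if_neg hc]; ring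
      · rw [if_neg hI, if_neg hc]; ring
  rw [Finset.sum_congr rfl (fun ω _ => hterm ω), ← Finset.sum_mul]
  have hpr : (∑ ω, if restr A ω = α ∧ restr I ω = τI ∧ restr {i} ω = τ then X.π ω else 0)
      = pr X (fun ω => restr A ω = α ∧ restr I ω = τI ∧ restr {i} ω = τ) :=
    Finset.sum_congr rfl (fun ω _ => ite_eq_ite Iff.rfl _ _ _ _)
  rw [hpr]
  ring

end WPCfacts2


section EtaFacts
variable {n : ℕ} {U : Fin n → Type*} [∀ i, Fintype (U i)] [∀ i, DecidableEq (U i)]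
variable (X : WPC n U)

lemma pr_mono {E F : (∀ i, U i) → Prop} (h : ∀ ω, E ω → F ω) : pr X E ≤ pr X F := by
  apply Finset.sum_le_sum
  intro ω _
  by_cases hE : E ω
  · rw [if_pos hE, if_pos (h ω hE)]
  · rw [if_neg hE]
    split_ifs
    · exact X.nonneg ω
    · exact le_refl 0

lemma sum_pr_restr (P : (∀ i, U i) → Prop) (J : Finset (Fin n)) :
    ∑ τ : PAssign U J, pr X (fun ω => P ω ∧ restr J ω = τ) = pr X P := by
  unfold pr
  rw [Finset.sum_comm]
  apply Finset.sum_congr rfl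
  intro ω _
  dsimp only
  by_cases h : P ω
  · rw [if_pos h, Finset.sum_eq_single (restr J ω)]
    · exact if_pos ⟨h, rfl⟩
    · intro b _ hb
      exact if_neg (fun hh => hb hh.2.symm)
    · intro hmem
      exact absurd (Finset.mem_univ _) hmem
  · rw [if_neg h]
    exact Finset.sum_eq_zero (fun τ _ => if_neg (fun hh => h hh.1))

lemma sum_pr_mid (P R : (∀ i, U i) → Prop) (I : Finset (Fin n)) :
    ∑ τ : PAssign U I, pr X (fun ω => P ω ∧ restr I ω = τ ∧ R ω)
      = pr X (fun ω => P ω ∧ R ω) := by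
  unfold pr
  rw [Finset.sum_comm]
  apply Finset.sum_congr rfl
  intro ω _
  dsimp only
  by_cases h : P ω ∧ R ω
  · rw [if_pos h, Finset.sum_eq_single (restr I ω)]
    · exact if_pos ⟨h.1, rfl, h.2⟩
    · intro b _ hb
      exact if_neg (fun hh => hb hh.2.1.symm)
    · intro hmem
      exact absurd (Finset.mem_univ _) hmem
  · rw [if_neg h]
    exact Finset.sum_eq_zero (fun τ _ => if_neg (fun hh => h ⟨hh.1, hh.2.2⟩))

lemma cmarg_nonneg {S T : Finset (Fin n)} (α : PAssign U S) (β : PAssign U T) :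
    0 ≤ cmarg X α β :=
  div_nonneg (pr_nonneg X _) (pr_nonneg X _)

lemma Cwalk_nonneg (S I J : Finset (Fin n)) (α : PAssign U S) (τI : PAssign U I)
    (τJ : PAssign U J) : 0 ≤ Cwalk X S I J α τI τJ :=
  div_nonneg (pr_nonneg X _) (pr_nonneg X _)

lemma sum_cmarg {S T : Finset (Fin n)} (α : PAssign U S) (h : marg X S α ≠ 0) :
    ∑ β : PAssign U T, cmarg X α β = 1 := by
  unfold cmarg
  rw [← Finset.sum_div, sum_pr_restr X (fun ω => restr S ω = α) T]
  exact div_self h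

lemma Cwalk_row_sum (S I J : Finset (Fin n)) (α : PAssign U S) (τI : PAssign U I)
    (h : pr X (fun ω => restr S ω = α ∧ restr I ω = τI) ≠ 0) :
    ∑ τJ : PAssign U J, Cwalk X S I J α τI τJ = 1 := by
  unfold Cwalk
  rw [← Finset.sum_div]
  rw [Finset.sum_congr rfl (fun τJ _ => pr_congr X (fun ω =>
    (and_assoc (a := restr S ω = α) (b := restr I ω = τI) (c := restr J ω = τJ)).symm))]
  rw [sum_pr_restr X (fun ω => restr S ω = α ∧ restr I ω = τI) J]
  exact div_self h

lemma cmarg_Cwalk (S I J : Finset (Fin n)) (α : PAssign U S) (τJ : PAssign U J) :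
    ∑ τI : PAssign U I, cmarg X α τI * Cwalk X S I J α τI τJ
      = cmarg X (S := S) (T := J) α τJ := by
  have key : ∀ τI : PAssign U I, cmarg X α τI * Cwalk X S I J α τI τJ
      = pr X (fun ω => restr S ω = α ∧ restr I ω = τI ∧ restr J ω = τJ) / marg X S α := by
    intro τI
    unfold cmarg Cwalk
    by_cases h : pr X (fun ω => restr S ω = α ∧ restr I ω = τI) = 0
    · have htri : pr X (fun ω => restr S ω = α ∧ restr I ω = τI ∧ restr J ω = τJ) = 0 :=
        le_antisymm (h ▸ pr_mono X (fun ω hh => ⟨hh.1, hh.2.1⟩)) (pr_nonneg X _)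
      rw [h, htri]
      simp
    · rw [div_mul_div_comm, mul_comm (pr X fun ω => restr S ω = α ∧ restr I ω = τI)
        (pr X fun ω => restr S ω = α ∧ restr I ω = τI ∧ restr J ω = τJ)]
      exact mul_div_mul_right _ _ h
  rw [Finset.sum_congr rfl (fun τI _ => key τI), ← Finset.sum_div]
  rw [sum_pr_mid X (fun ω => restr S ω = α) (fun ω => restr J ω = τJ) I]
  rfl

lemma cmarg_eq_jointd {S T : Finset (Fin n)} (α : PAssign U S) (β : PAssign U T) :
    cmarg X α β = jointd X.π S T α β / distMarg X.π S α := by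
  unfold cmarg
  rw [pr_eq_jointd, marg_eq_distMarg]

lemma cmarg_zero_iff {S T : Finset (Fin n)} (α : PAssign U S) (β : PAssign U T)
    (hα : marg X S α ≠ 0) :
    cmarg X α β = 0 ↔ pr X (fun ω => restr S ω = α ∧ restr T ω = β) = 0 := by
  unfold cmarg
  constructor
  · intro h
    by_contra hpr
    have h1 : 0 < pr X (fun ω => restr S ω = α ∧ restr T ω = β) :=
      lt_of_le_of_ne (pr_nonneg X _) (Ne.symm hpr)
    have h2 : 0 < marg X S α := lt_of_le_of_ne (pr_nonneg X _) (Ne.symm hα)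
    exact absurd h (ne_of_gt (div_pos h1 h2))
  · intro h; rw [h, zero_div]

lemma KL_cmargI_nonneg (S I : Finset (Fin n)) (α : PAssign U S) (hα : marg X S α ≠ 0)
    (μ' : PAssign U I → ℝ)
    (hd : distOn (fun τ => 0 < pr X fun ω => restr S ω = α ∧ restr I ω = τ) μ') :
    0 ≤ KL μ' (fun τI : PAssign U I => cmarg X α τI) := by
  apply KL_nonneg _ _ hd.1 (fun τI => cmarg_nonneg X α τI)
  · intro τI h
    apply hd.2.2
    dsimp only
    rw [(cmarg_zero_iff X α τI hα).mp h]
    exact lt_irrefl 0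
  · rw [sum_cmarg X α hα, hd.2.1]

lemma sum_push (S I J : Finset (Fin n)) (α : PAssign U S) (μ' : PAssign U I → ℝ)
    (hd : distOn (fun τ => 0 < pr X fun ω => restr S ω = α ∧ restr I ω = τ) μ') :
    ∑ τJ : PAssign U J, (∑ τI : PAssign U I, μ' τI * Cwalk X S I J α τI τJ) = 1 := by
  rw [Finset.sum_comm]
  have key : ∀ τI : PAssign U I, ∑ τJ : PAssign U J, μ' τI * Cwalk X S I J α τI τJ = μ' τI := by
    intro τI
    rw [← Finset.mul_sum]
    by_cases h : μ' τI = 0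
    · rw [h]; ring
    · have hpr : pr X (fun ω => restr S ω = α ∧ restr I ω = τI) ≠ 0 := by
        intro hc
        exact h (hd.2.2 τI (by intro hlt; simp only [hc, lt_self_iff_false] at hlt))
      rw [Cwalk_row_sum X S I J α τI hpr, mul_one]
  rw [Finset.sum_congr rfl (fun τI _ => key τI), hd.2.1]

lemma KL_push_nonneg (S I J : Finset (Fin n)) (α : PAssign U S) (hα : marg X S α ≠ 0)
    (μ' : PAssign U I → ℝ)
    (hd : distOn (fun τ => 0 < pr X fun ω => restr S ω = α ∧ restr I ω = τ) μ') :
    0 ≤ KL (fun τJ : PAssign U J => ∑ τI : PAssign U I, μ' τI * Cwalk X S I J α τI τJ)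
        (fun τJ : PAssign U J => cmarg X α τJ) := by
  apply KL_nonneg
  · intro τJ
    exact Finset.sum_nonneg (fun τI _ => mul_nonneg (hd.1 τI) (Cwalk_nonneg X S I J α τI τJ))
  · intro τJ; exact cmarg_nonneg X α τJ
  · intro τJ h
    have hprJ : pr X (fun ω => restr S ω = α ∧ restr J ω = τJ) = 0 :=
      (cmarg_zero_iff X α τJ hα).mp h
    apply Finset.sum_eq_zero
    intro τI _
    have htri : pr X (fun ω => restr S ω = α ∧ restr I ω = τI ∧ restr J ω = τJ) = 0 :=
      le_antisymm (hprJ ▸ pr_mono X (fun ω hh => ⟨hh.1, hh.2.2⟩)) (pr_nonneg X _)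
    unfold Cwalk
    rw [htri, zero_div, mul_zero]
  · rw [sum_cmarg X α hα, sum_push X S I J α μ' hd]

lemma KL_Cwalk_le (S I J : Finset (Fin n)) (α : PAssign U S) (hα : marg X S α ≠ 0)
    (μ' : PAssign U I → ℝ)
    (hd : distOn (fun τ => 0 < pr X fun ω => restr S ω = α ∧ restr I ω = τ) μ') :
    KL (fun τJ : PAssign U J => ∑ τI : PAssign U I, μ' τI * Cwalk X S I J α τI τJ)
        (fun τJ : PAssign U J => cmarg X α τJ)
      ≤ KL μ' (fun τI : PAssign U I => cmarg X α τI) := by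
  have hDPI := KL_DPI μ' (fun τI : PAssign U I => cmarg X α τI) (Cwalk X S I J α)
    hd.1 (fun τI => cmarg_nonneg X α τI) (fun τI τJ => Cwalk_nonneg X S I J α τI τJ)
    (fun τI h => hd.2.2 τI (by
      intro hlt
      simp only [(cmarg_zero_iff X α τI hα).mp (by exact h), lt_self_iff_false] at hlt))
    (fun τI h => Cwalk_row_sum X S I J α τI (fun hc =>
      h (by show cmarg X α τI = 0; unfold cmarg; rw [hc, zero_div])))
  have heq : (fun τJ : PAssign U J => ∑ τI : PAssign U I, cmarg X α τI * Cwalk X S I J α τI τJ)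
      = fun τJ : PAssign U J => cmarg X α τJ := by
    funext τJ
    exact cmarg_Cwalk X S I J α τJ
  rw [heq] at hDPI
  exact hDPI

lemma etaIJ_bounds (I J : Finset (Fin n)) :
    0 ≤ etaIJ X I J ∧ etaIJ X I J ≤ 1 := by
  set ES := { r : ℝ | ∃ α : PAssign U (I ∪ J)ᶜ, 0 < marg X (I ∪ J)ᶜ α ∧
    ∃ μ : PAssign U I → ℝ,
      distOn (fun τ => 0 < pr X fun ω => restr (I ∪ J)ᶜ ω = α ∧ restr I ω = τ) μ ∧
      KL μ (fun τ : PAssign U I => cmarg X α τ) ≠ 0 ∧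
      r = KL (fun τJ : PAssign U J => ∑ τI : PAssign U I, μ τI * Cwalk X (I ∪ J)ᶜ I J α τI τJ)
            (fun τJ : PAssign U J => cmarg X α τJ) /
          KL μ (fun τ : PAssign U I => cmarg X α τ) } with hES
  have hup : ∀ r ∈ ES, r ≤ 1 := by
    rintro r ⟨α, hα, μ', hd, hKL, rfl⟩
    have hden : 0 < KL μ' (fun τ : PAssign U I => cmarg X α τ) :=
      lt_of_le_of_ne (KL_cmargI_nonneg X _ I α (ne_of_gt hα) μ' hd) (Ne.symm hKL)
    rw [div_le_one hden]
    exact KL_Cwalk_le X _ I J α (ne_of_gt hα) μ' hd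
  have hsup_le : sSup ES ≤ 1 := Real.sSup_le hup zero_le_one
  have hsup_ge : 0 ≤ sSup ES := by
    rcases Set.eq_empty_or_nonempty ES with hE | hE
    · rw [hE, Real.sSup_empty]
    · obtain ⟨r, hr⟩ := hE
      refine le_trans ?_ (le_csSup ⟨1, hup⟩ hr)
      obtain ⟨α, hα, μ', hd, hKL, rfl⟩ := hr
      have hden : 0 < KL μ' (fun τ : PAssign U I => cmarg X α τ) :=
        lt_of_le_of_ne (KL_cmargI_nonneg X _ I α (ne_of_gt hα) μ' hd) (Ne.symm hKL)
      exact div_nonneg (KL_push_nonneg X _ I J α (ne_of_gt hα) μ' hd) (le_of_lt hden)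
  constructor
  · show 0 ≤ 1 - sSup _
    have : sSup { r : ℝ | ∃ α : PAssign U (I ∪ J)ᶜ, 0 < marg X (I ∪ J)ᶜ α ∧
      ∃ μ : PAssign U I → ℝ,
        distOn (fun τ => 0 < pr X fun ω => restr (I ∪ J)ᶜ ω = α ∧ restr I ω = τ) μ ∧
        KL μ (fun τ : PAssign U I => cmarg X α τ) ≠ 0 ∧
        r = KL (fun τJ : PAssign U J => ∑ τI : PAssign U I, μ τI * Cwalk X (I ∪ J)ᶜ I J α τI τJ)
              (fun τJ : PAssign U J => cmarg X α τJ) /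
            KL μ (fun τ : PAssign U I => cmarg X α τ) } ≤ 1 := hsup_le
    linarith
  · show 1 - sSup _ ≤ 1
    have : (0:ℝ) ≤ sSup { r : ℝ | ∃ α : PAssign U (I ∪ J)ᶜ, 0 < marg X (I ∪ J)ᶜ α ∧
      ∃ μ : PAssign U I → ℝ,
        distOn (fun τ => 0 < pr X fun ω => restr (I ∪ J)ᶜ ω = α ∧ restr I ω = τ) μ ∧
        KL μ (fun τ : PAssign U I => cmarg X α τ) ≠ 0 ∧
        r = KL (fun τJ : PAssign U J => ∑ τI : PAssign U I, μ τI * Cwalk X (I ∪ J)ᶜ I J α τI τJ)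
              (fun τJ : PAssign U J => cmarg X α τJ) /
            KL μ (fun τ : PAssign U I => cmarg X α τ) } := hsup_ge
    linarith

lemma eta_bound (I J S : Finset (Fin n)) (hS : S = (I ∪ J)ᶜ) (α : PAssign U S)
    (hα : 0 < marg X S α) (μ' : PAssign U I → ℝ)
    (hd : distOn (fun τ => 0 < pr X fun ω => restr S ω = α ∧ restr I ω = τ) μ') :
    KL (fun τJ : PAssign U J => ∑ τI : PAssign U I, μ' τI * Cwalk X S I J α τI τJ)
        (fun τJ : PAssign U J => cmarg X α τJ)
      ≤ (1 - etaIJ X I J) * KL μ' (fun τI : PAssign U I => cmarg X α τI) := by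
  subst hS
  by_cases h0 : KL μ' (fun τI : PAssign U I => cmarg X α τI) = 0
  · rw [h0, mul_zero]
    exact le_trans (KL_Cwalk_le X _ I J α (ne_of_gt hα) μ' hd) (le_of_eq h0)
  · have hden : 0 < KL μ' (fun τI : PAssign U I => cmarg X α τI) :=
      lt_of_le_of_ne (KL_cmargI_nonneg X _ I α (ne_of_gt hα) μ' hd) (Ne.symm h0)
    have hmem : KL (fun τJ : PAssign U J => ∑ τI : PAssign U I, μ' τI * Cwalk X (I ∪ J)ᶜ I J α τI τJ)
          (fun τJ : PAssign U J => cmarg X α τJ) / KL μ' (fun τI : PAssign U I => cmarg X α τI)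
        ∈ { r : ℝ | ∃ α : PAssign U (I ∪ J)ᶜ, 0 < marg X (I ∪ J)ᶜ α ∧
          ∃ μ : PAssign U I → ℝ,
            distOn (fun τ => 0 < pr X fun ω => restr (I ∪ J)ᶜ ω = α ∧ restr I ω = τ) μ ∧
            KL μ (fun τ : PAssign U I => cmarg X α τ) ≠ 0 ∧
            r = KL (fun τJ : PAssign U J => ∑ τI : PAssign U I, μ τI * Cwalk X (I ∪ J)ᶜ I J α τI τJ)
                  (fun τJ : PAssign U J => cmarg X α τJ) /
                KL μ (fun τ : PAssign U I => cmarg X α τ) } :=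
      ⟨α, hα, μ', hd, h0, rfl⟩
    have hbdd : BddAbove { r : ℝ | ∃ α : PAssign U (I ∪ J)ᶜ, 0 < marg X (I ∪ J)ᶜ α ∧
          ∃ μ : PAssign U I → ℝ,
            distOn (fun τ => 0 < pr X fun ω => restr (I ∪ J)ᶜ ω = α ∧ restr I ω = τ) μ ∧
            KL μ (fun τ : PAssign U I => cmarg X α τ) ≠ 0 ∧
            r = KL (fun τJ : PAssign U J => ∑ τI : PAssign U I, μ τI * Cwalk X (I ∪ J)ᶜ I J α τI τJ)
                  (fun τJ : PAssign U J => cmarg X α τJ) /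
                KL μ (fun τ : PAssign U I => cmarg X α τ) } := by
      refine ⟨1, ?_⟩
      rintro r ⟨α', hα', μ'', hd', hKL', rfl⟩
      have hden' : 0 < KL μ'' (fun τ : PAssign U I => cmarg X α' τ) :=
        lt_of_le_of_ne (KL_cmargI_nonneg X _ I α' (ne_of_gt hα') μ'' hd') (Ne.symm hKL')
      rw [div_le_one hden']
      exact KL_Cwalk_le X _ I J α' (ne_of_gt hα') μ'' hd'
    have hle := le_csSup hbdd hmem
    have h1eta : 1 - etaIJ X I J = sSup { r : ℝ | ∃ α : PAssign U (I ∪ J)ᶜ, 0 < marg X (I ∪ J)ᶜ α ∧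
          ∃ μ : PAssign U I → ℝ,
            distOn (fun τ => 0 < pr X fun ω => restr (I ∪ J)ᶜ ω = α ∧ restr I ω = τ) μ ∧
            KL μ (fun τ : PAssign U I => cmarg X α τ) ≠ 0 ∧
            r = KL (fun τJ : PAssign U J => ∑ τI : PAssign U I, μ τI * Cwalk X (I ∪ J)ᶜ I J α τI τJ)
                  (fun τJ : PAssign U J => cmarg X α τJ) /
                KL μ (fun τ : PAssign U I => cmarg X α τ) } := by
      unfold etaIJ; ring
    rw [h1eta]
    rw [div_le_iff₀ hden] at hle
    exact hle

end EtaFacts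


section MainDev
variable {n : ℕ} {U : Fin n → Type*} [∀ i, Fintype (U i)] [∀ i, DecidableEq (U i)]

lemma KL_distMarg_le (X : WPC n U) (ν : (∀ i, U i) → ℝ) (hν0 : ∀ ω, 0 ≤ ν ω)
    (habs : ∀ ω, ν ω ≠ 0 → X.π ω ≠ 0) (S : Finset (Fin n)) :
    KL (distMarg ν S) (distMarg X.π S) ≤ KL ν X.π := by
  have h := KL_DPI ν X.π (fun ω (a : PAssign U S) => if restr S ω = a then (1:ℝ) else 0)
    hν0 X.nonneg (fun ω a => by split_ifs; exacts [zero_le_one, le_refl 0])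
    (fun ω h0 => by_contra (fun hne => habs ω hne h0))
    (fun ω _ => by rw [Finset.sum_ite_eq]; simp)
  have e1 : (fun a : PAssign U S => ∑ ω, ν ω * (if restr S ω = a then (1:ℝ) else 0))
      = distMarg ν S := by
    funext a
    apply Finset.sum_congr rfl
    intro ω _
    split_ifs
    · exact mul_one _
    · exact mul_zero _
  have e2 : (fun a : PAssign U S => ∑ ω, X.π ω * (if restr S ω = a then (1:ℝ) else 0))
      = distMarg X.π S := by
    funext a
    apply Finset.sum_congr rfl
    intro ω _
    split_ifs
    · exact mul_one _
    · exact mul_zero _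
  rw [e1, e2] at h
  exact h

/-- the sweep sequence -/
def muSeq (X : WPC n U) (s : Equiv.Perm (Fin n)) (μ : (∀ i, U i) → ℝ) : ℕ → ((∀ i, U i) → ℝ)
  | 0 => μ
  | j + 1 => if h : j < n then Matrix.vecMul (muSeq X s μ j) (Qmat X (s ⟨j, h⟩))
      else muSeq X s μ j

/-- coordinates updated before step j -/
def Pst (s : Equiv.Perm (Fin n)) (j : ℕ) : Finset (Fin n) :=
  Finset.univ.filter (fun k : Fin n => ((s.symm k : Fin n) : ℕ) < j)

/-- coordinates updated after step jj -/
def Fut (s : Equiv.Perm (Fin n)) (jj : Fin n) : Finset (Fin n) :=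
  (Finset.univ.filter fun k : Fin n => jj < k).image fun k => s k

def etaD (X : WPC n U) (s : Equiv.Perm (Fin n)) (m : ℕ) : ℝ :=
  if h : m < n then etaIJ X (Fut s ⟨m, h⟩) {s ⟨m, h⟩} else 1

lemma mem_Pst {s : Equiv.Perm (Fin n)} {j : ℕ} {k : Fin n} :
    k ∈ Pst s j ↔ ((s.symm k : Fin n) : ℕ) < j := by
  simp [Pst]

lemma mem_Fut {s : Equiv.Perm (Fin n)} {jj : Fin n} {k : Fin n} :
    k ∈ Fut s jj ↔ jj < s.symm k := by
  simp only [Fut, Finset.mem_image, Finset.mem_filter, Finset.mem_univ, true_and]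
  constructor
  · rintro ⟨m, hm, rfl⟩
    rwa [Equiv.symm_apply_apply]
  · intro h
    exact ⟨s.symm k, h, Equiv.apply_symm_apply s k⟩

lemma idA (s : Equiv.Perm (Fin n)) {j : ℕ} (hj : j < n) :
    (Fut s ⟨j, hj⟩ ∪ {s ⟨j, hj⟩})ᶜ = Pst s j := by
  ext k
  simp only [Finset.mem_compl, Finset.mem_union, Finset.mem_singleton, mem_Fut, mem_Pst]
  rw [← Equiv.symm_apply_eq]
  rw [Fin.lt_def, Fin.ext_iff]
  simp only [Fin.val_mk]
  have := (s.symm k).isLt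
  push_neg
  omega

lemma idB (s : Equiv.Perm (Fin n)) {j : ℕ} (hj : j < n) :
    Pst s j ∪ {s ⟨j, hj⟩} = Pst s (j + 1) := by
  ext k
  simp only [Finset.mem_union, Finset.mem_singleton, mem_Pst]
  rw [← Equiv.symm_apply_eq, Fin.ext_iff]
  simp only [Fin.val_mk]
  omega

lemma idC (s : Equiv.Perm (Fin n)) {j : ℕ} (hj : j < n) :
    ({s ⟨j, hj⟩}ᶜ : Finset (Fin n)) = Pst s j ∪ Fut s ⟨j, hj⟩ := by
  ext k
  simp only [Finset.mem_compl, Finset.mem_singleton, Finset.mem_union, mem_Pst, mem_Fut]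
  rw [← Equiv.symm_apply_eq, Fin.ext_iff, Fin.lt_def]
  have := (s.symm k).isLt
  simp only [Fin.val_mk]
  push_neg
  omega

lemma idE (s : Equiv.Perm (Fin n)) (hn : 0 < n) :
    ({s ⟨n - 1, by omega⟩}ᶜ : Finset (Fin n)) = Pst s (n - 1) := by
  ext k
  simp only [Finset.mem_compl, Finset.mem_singleton, mem_Pst]
  rw [← Equiv.symm_apply_eq, Fin.ext_iff]
  have := (s.symm k).isLt
  simp only [Fin.val_mk]
  omega

lemma s_not_mem_Pst (s : Equiv.Perm (Fin n)) {j : ℕ} (hj : j < n) :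
    s ⟨j, hj⟩ ∉ Pst s j := by
  rw [mem_Pst, Equiv.symm_apply_apply]
  simp

lemma Pst_zero (s : Equiv.Perm (Fin n)) : Pst s 0 = ∅ := by
  ext k
  simp [mem_Pst]

lemma muSeq_nonneg (X : WPC n U) (s : Equiv.Perm (Fin n)) (μ : (∀ i, U i) → ℝ)
    (hμ0 : ∀ ω, 0 ≤ μ ω) : ∀ j ω, 0 ≤ muSeq X s μ j ω := by
  intro j
  induction j with
  | zero => exact hμ0
  | succ j ih =>
    intro ω
    unfold muSeq
    split_ifs with h
    · exact vecMul_Qmat_nonneg X _ ih _ ω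
    · exact ih ω

lemma muSeq_abs (X : WPC n U) (s : Equiv.Perm (Fin n)) (μ : (∀ i, U i) → ℝ)
    (habs0 : ∀ ω, μ ω ≠ 0 → X.π ω ≠ 0) : ∀ j ω, muSeq X s μ j ω ≠ 0 → X.π ω ≠ 0 := by
  intro j
  induction j with
  | zero => exact habs0
  | succ j ih =>
    intro ω h
    unfold muSeq at h
    split_ifs at h with hc
    · exact vecMul_Qmat_abs X _ _ ω h
    · exact ih ω h

lemma muSeq_eq_Psq (X : WPC n U) (s : Equiv.Perm (Fin n)) (μ : (∀ i, U i) → ℝ) :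
    muSeq X s μ n = Matrix.vecMul μ (Psq X s) := by
  have key : ∀ m, m ≤ n → muSeq X s μ m
      = Matrix.vecMul μ (((List.ofFn fun j : Fin n => Qmat X (s j)).take m).prod) := by
    intro m
    induction m with
    | zero =>
      intro _
      simp [muSeq, Matrix.vecMul_one]
    | succ m ih =>
      intro hm
      have hmn : m < n := lt_of_lt_of_le (Nat.lt_succ_self m) hm
      have htake : (List.ofFn fun j : Fin n => Qmat X (s j)).take (m + 1)
          = (List.ofFn fun j : Fin n => Qmat X (s j)).take m ++ [Qmat X (s ⟨m, hmn⟩)] := by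
        rw [List.take_succ]
        congr 1
        rw [List.getElem?_ofFn]
        simp [List.ofFnNthVal, hmn]
      show (if h : m < n then Matrix.vecMul (muSeq X s μ m) (Qmat X (s ⟨m, h⟩))
          else muSeq X s μ m) = _
      rw [dif_pos hmn, ih (le_of_lt hmn), htake, List.prod_append, List.prod_singleton,
        Matrix.vecMul_vecMul]
  rw [key n (le_refl n), List.take_of_length_le (le_of_eq (List.length_ofFn))]
  rfl

end MainDev


section Final
variable {n : ℕ} {U : Fin n → Type*} [∀ i, Fintype (U i)] [∀ i, DecidableEq (U i)]

lemma KL_mu_nonneg (X : WPC n U) (μ : (∀ i, U i) → ℝ)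
    (hμ : distOn (fun ω => ω ∈ X.Ω) μ) : 0 ≤ KL μ X.π := by
  apply KL_nonneg μ X.π hμ.1 X.nonneg
  · intro ω h0
    by_contra hne
    have hΩ : ω ∈ X.Ω := by
      by_contra hc
      exact hne (hμ.2.2 ω hc)
    exact absurd h0 (ne_of_gt ((X.support ω).mpr hΩ))
  · rw [X.sum_one, hμ.2.1]

lemma main_ineq (X : WPC n U) (s : Equiv.Perm (Fin n)) (μ : (∀ i, U i) → ℝ)
    (hμ : distOn (fun ω => ω ∈ X.Ω) μ) :
    KL (Matrix.vecMul μ (Psq X s)) X.π ≤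
      (1 - ∏ j ∈ Finset.univ.filter (fun j : Fin n => (j : ℕ) < n - 1),
        etaIJ X ((Finset.univ.filter fun k : Fin n => j < k).image fun k => s k) {s j}) *
        KL μ X.π := by
  have hμ0 : ∀ ω, 0 ≤ μ ω := hμ.1
  have habs0 : ∀ ω, μ ω ≠ 0 → X.π ω ≠ 0 := by
    intro ω h
    have hΩ : ω ∈ X.Ω := by
      by_contra hc
      exact h (hμ.2.2 ω hc)
    exact ne_of_gt ((X.support ω).mpr hΩ)
  have he0 : 0 ≤ KL μ X.π := KL_mu_nonneg X μ hμ
  rcases Nat.eq_zero_or_pos n with hn | hn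
  · -- n = 0
    subst hn
    have hset : (Finset.univ.filter (fun j : Fin 0 => (j : ℕ) < 0 - 1)) = ∅ :=
      Finset.eq_empty_of_isEmpty _
    have hPsq : Psq X s = 1 := by
      unfold Psq
      rw [List.ofFn_zero, List.prod_nil]
    have hω : ∀ ω ω' : (∀ i : Fin 0, U i), ω = ω' := fun ω ω' => funext fun i => i.elim0
    have huniv : (Finset.univ : Finset (∀ i : Fin 0, U i)) = {fun i => i.elim0} := by
      ext ω
      simp only [Finset.mem_univ, Finset.mem_singleton, true_iff]
      exact hω ω _
    have hμ1 : μ (fun i => i.elim0) = 1 := by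
      have := hμ.2.1
      rwa [huniv, Finset.sum_singleton] at this
    have hπ1 : X.π (fun i => i.elim0) = 1 := by
      have := X.sum_one
      rwa [huniv, Finset.sum_singleton] at this
    have hKL0 : KL μ X.π = 0 := by
      rw [KL, huniv, Finset.sum_singleton, hμ1, hπ1]
      simp
    rw [hPsq, Matrix.vecMul_one, hset, Finset.prod_empty, hKL0]
    simp
  · -- n ≥ 1
    have hnn := muSeq_nonneg X s μ hμ0
    have hab := muSeq_abs X s μ habs0
    have hstepA : ∀ (j : ℕ) (hj : j < n),
        KL (muSeq X s μ (j+1)) X.π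
          = KL (distMarg (muSeq X s μ j) ({s ⟨j, hj⟩}ᶜ))
              (distMarg X.π ({s ⟨j, hj⟩}ᶜ)) := by
      intro j hj
      have hstep : muSeq X s μ (j+1) = Matrix.vecMul (muSeq X s μ j) (Qmat X (s ⟨j, hj⟩)) := by
        show (if h : j < n then Matrix.vecMul (muSeq X s μ j) (Qmat X (s ⟨j, h⟩))
            else muSeq X s μ j) = _
        rw [dif_pos hj]
      rw [hstep, KL_vecMul_Qmat X _ (hnn j) (hab j)]
    have hmono : ∀ j : ℕ, KL (muSeq X s μ j) X.π ≤ KL μ X.π := by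
      intro j
      induction j with
      | zero => exact le_refl _
      | succ j ih =>
        rcases Nat.lt_or_ge j n with hj | hj
        · refine le_trans ?_ ih
          rw [hstepA j hj]
          exact KL_distMarg_le X _ (hnn j) (hab j) _
        · have heq : muSeq X s μ (j+1) = muSeq X s μ j := by
            show (if h : j < n then Matrix.vecMul (muSeq X s μ j) (Qmat X (s ⟨j, h⟩))
                else muSeq X s μ j) = _
            rw [dif_neg (not_lt.mpr hj)]
          rw [heq]
          exact ih
    have hetaD0 : ∀ m, 0 ≤ etaD X s m := by
      intro m
      rw [etaD]
      split_ifs with h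
      · exact (etaIJ_bounds X _ _).1
      · exact zero_le_one
    have hetaD1 : ∀ m, etaD X s m ≤ 1 := by
      intro m
      rw [etaD]
      split_ifs with h
      · exact (etaIJ_bounds X _ _).2
      · exact le_refl 1
    -- the key recursion step
    have hstep : ∀ (j : ℕ) (hj : j < n),
        KL (distMarg (muSeq X s μ (j+1)) (Pst s (j+1))) (distMarg X.π (Pst s (j+1)))
          ≤ KL (distMarg (muSeq X s μ j) (Pst s j)) (distMarg X.π (Pst s j))
            + (1 - etaD X s j) *
              (KL (muSeq X s μ (j+1)) X.π
                - KL (distMarg (muSeq X s μ j) (Pst s j)) (distMarg X.π (Pst s j))) := by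
      intro j hj
      have hν'eq : muSeq X s μ (j+1) = Matrix.vecMul (muSeq X s μ j) (Qmat X (s ⟨j, hj⟩)) := by
        show (if h : j < n then Matrix.vecMul (muSeq X s μ j) (Qmat X (s ⟨j, h⟩))
            else muSeq X s μ j) = _
        rw [dif_pos hj]
      have hmargpres : distMarg (muSeq X s μ (j+1)) (Pst s j)
          = distMarg (muSeq X s μ j) (Pst s j) := by
        rw [hν'eq]
        exact distMarg_vecMul_Qmat X _ (hnn j) (hab j) (s ⟨j, hj⟩) (Pst s j)
          (s_not_mem_Pst s hj)
      have hchainC := KL_chain X (muSeq X s μ (j+1)) (hnn (j+1)) (hab (j+1))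
        (Pst s j) ({s ⟨j, hj⟩}) (Pst s (j+1)) (idB s hj).symm
      have hchainB := KL_chain X (muSeq X s μ j) (hnn j) (hab j)
        (Pst s j) (Fut s ⟨j, hj⟩) ({s ⟨j, hj⟩}ᶜ) (idC s hj)
      have hB : KL (muSeq X s μ (j+1)) X.π
          = KL (distMarg (muSeq X s μ j) (Pst s j)) (distMarg X.π (Pst s j))
            + ∑ α : PAssign U (Pst s j), distMarg (muSeq X s μ j) (Pst s j) α *
                KL (fun τ : PAssign U (Fut s ⟨j, hj⟩) =>
                      jointd (muSeq X s μ j) (Pst s j) (Fut s ⟨j, hj⟩) α τ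
                        / distMarg (muSeq X s μ j) (Pst s j) α)
                   (fun τ : PAssign U (Fut s ⟨j, hj⟩) =>
                      jointd X.π (Pst s j) (Fut s ⟨j, hj⟩) α τ
                        / distMarg X.π (Pst s j) α) := by
        rw [hstepA j hj]
        exact hchainB
      rw [hchainC, hmargpres]
      rw [show KL (muSeq X s μ (j+1)) X.π
            - KL (distMarg (muSeq X s μ j) (Pst s j)) (distMarg X.π (Pst s j))
          = ∑ α : PAssign U (Pst s j), distMarg (muSeq X s μ j) (Pst s j) α *
                KL (fun τ : PAssign U (Fut s ⟨j, hj⟩) =>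
                      jointd (muSeq X s μ j) (Pst s j) (Fut s ⟨j, hj⟩) α τ
                        / distMarg (muSeq X s μ j) (Pst s j) α)
                   (fun τ : PAssign U (Fut s ⟨j, hj⟩) =>
                      jointd X.π (Pst s j) (Fut s ⟨j, hj⟩) α τ
                        / distMarg X.π (Pst s j) α)
        from by rw [hB]; ring]
      apply add_le_add (le_refl _)
      rw [Finset.mul_sum]
      apply Finset.sum_le_sum
      intro α _
      by_cases hm : distMarg (muSeq X s μ j) (Pst s j) α = 0
      · rw [hm, zero_mul, zero_mul, mul_zero]
      · have hmpos : 0 < distMarg (muSeq X s μ j) (Pst s j) α :=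
          lt_of_le_of_ne (distMarg_nonneg _ (hnn j) _ _) (Ne.symm hm)
        obtain ⟨ω0, hω0r, hω0ν⟩ := exists_of_distMarg_ne (muSeq X s μ j) hm
        have hπω0 : 0 < X.π ω0 :=
          lt_of_le_of_ne (X.nonneg ω0) (Ne.symm (hab j ω0 hω0ν))
        have hmargα : 0 < marg X (Pst s j) α := pr_pos_of X _ hω0r hπω0
        have hd : distOn (fun τ => 0 < pr X fun ω => restr (Pst s j) ω = α
              ∧ restr (Fut s ⟨j, hj⟩) ω = τ)
            (fun τI : PAssign U (Fut s ⟨j, hj⟩) =>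
              jointd (muSeq X s μ j) (Pst s j) (Fut s ⟨j, hj⟩) α τI
                / distMarg (muSeq X s μ j) (Pst s j) α) := by
          refine ⟨fun τ => div_nonneg (jointd_nonneg _ (hnn j) _ _ _ _) (le_of_lt hmpos), ?_, ?_⟩
          · rw [← Finset.sum_div, sum_jointd, div_self hm]
          · intro τ hnp
            by_contra hne
            have hJ : jointd (muSeq X s μ j) (Pst s j) (Fut s ⟨j, hj⟩) α τ ≠ 0 := by
              intro hc
              exact hne (by dsimp only; rw [hc, zero_div])
            obtain ⟨ω, h1, h2, h3⟩ := exists_of_jointd_ne _ hJ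
            exact hnp (pr_pos_of X _ ⟨h1, h2⟩
              (lt_of_le_of_ne (X.nonneg ω) (Ne.symm (hab j ω h3))))
        have hqα : (fun τ : PAssign U ({s ⟨j, hj⟩} : Finset (Fin n)) =>
              jointd (muSeq X s μ (j+1)) (Pst s j) {s ⟨j, hj⟩} α τ
                / distMarg (muSeq X s μ j) (Pst s j) α)
            = fun τ : PAssign U ({s ⟨j, hj⟩} : Finset (Fin n)) =>
                ∑ τI : PAssign U (Fut s ⟨j, hj⟩),
                  (jointd (muSeq X s μ j) (Pst s j) (Fut s ⟨j, hj⟩) α τI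
                    / distMarg (muSeq X s μ j) (Pst s j) α)
                  * Cwalk X (Pst s j) (Fut s ⟨j, hj⟩) {s ⟨j, hj⟩} α τI τ := by
          funext τ
          rw [hν'eq, jointd_vecMul_Qmat X (muSeq X s μ j) (s ⟨j, hj⟩) (Pst s j)
            (Fut s ⟨j, hj⟩) (idC s hj) α τ, Finset.sum_div]
          apply Finset.sum_congr rfl
          intro τI _
          rw [mul_div_right_comm]
          congr 1
          rw [← pr_eq_jointd X (Pst s j) (Fut s ⟨j, hj⟩) α τI]
          rfl
        have hrefJ : (fun τ : PAssign U ({s ⟨j, hj⟩} : Finset (Fin n)) =>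
              jointd X.π (Pst s j) {s ⟨j, hj⟩} α τ / distMarg X.π (Pst s j) α)
            = fun τ : PAssign U ({s ⟨j, hj⟩} : Finset (Fin n)) => cmarg X α τ := by
          funext τ
          exact (cmarg_eq_jointd X α τ).symm
        have hrefI : (fun τ : PAssign U (Fut s ⟨j, hj⟩) =>
              jointd X.π (Pst s j) (Fut s ⟨j, hj⟩) α τ / distMarg X.π (Pst s j) α)
            = fun τ : PAssign U (Fut s ⟨j, hj⟩) => cmarg X α τ := by
          funext τ
          exact (cmarg_eq_jointd X α τ).symm
        have heta := eta_bound X (Fut s ⟨j, hj⟩) {s ⟨j, hj⟩} (Pst s j) (idA s hj).symm α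
          hmargα _ hd
        have hetaDj : etaD X s j = etaIJ X (Fut s ⟨j, hj⟩) {s ⟨j, hj⟩} := by
          rw [etaD, dif_pos hj]
        rw [hqα, hrefJ, hrefI, hetaDj]
        calc distMarg (muSeq X s μ j) (Pst s j) α *
              KL (fun τ : PAssign U ({s ⟨j, hj⟩} : Finset (Fin n)) =>
                  ∑ τI : PAssign U (Fut s ⟨j, hj⟩),
                    (jointd (muSeq X s μ j) (Pst s j) (Fut s ⟨j, hj⟩) α τI
                      / distMarg (muSeq X s μ j) (Pst s j) α)
                    * Cwalk X (Pst s j) (Fut s ⟨j, hj⟩) {s ⟨j, hj⟩} α τI τ)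
                (fun τ : PAssign U ({s ⟨j, hj⟩} : Finset (Fin n)) => cmarg X α τ)
            ≤ distMarg (muSeq X s μ j) (Pst s j) α *
              ((1 - etaIJ X (Fut s ⟨j, hj⟩) {s ⟨j, hj⟩}) *
                KL (fun τI : PAssign U (Fut s ⟨j, hj⟩) =>
                    jointd (muSeq X s μ j) (Pst s j) (Fut s ⟨j, hj⟩) α τI
                      / distMarg (muSeq X s μ j) (Pst s j) α)
                  (fun τI : PAssign U (Fut s ⟨j, hj⟩) => cmarg X α τI)) :=
              mul_le_mul_of_nonneg_left heta (le_of_lt hmpos)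
          _ = (1 - etaIJ X (Fut s ⟨j, hj⟩) {s ⟨j, hj⟩}) *
              (distMarg (muSeq X s μ j) (Pst s j) α *
                KL (fun τI : PAssign U (Fut s ⟨j, hj⟩) =>
                    jointd (muSeq X s μ j) (Pst s j) (Fut s ⟨j, hj⟩) α τI
                      / distMarg (muSeq X s μ j) (Pst s j) α)
                  (fun τI : PAssign U (Fut s ⟨j, hj⟩) => cmarg X α τI)) := by ring
    -- induction
    have hPm : ∀ j : ℕ, j ≤ n - 1 →
        KL (distMarg (muSeq X s μ j) (Pst s j)) (distMarg X.π (Pst s j))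
          ≤ (1 - ∏ m ∈ Finset.range j, etaD X s m) * KL μ X.π := by
      intro j
      induction j with
      | zero =>
        intro _
        have h1 : KL (distMarg (muSeq X s μ 0) (Pst s 0)) (distMarg X.π (Pst s 0))
            = KL (distMarg μ (∅ : Finset (Fin n))) (distMarg X.π ∅) :=
          KL_distMarg_congr _ _ (Pst_zero s)
        have hz : KL (distMarg μ (∅ : Finset (Fin n))) (distMarg X.π ∅) = 0 := by
          rw [KL]
          apply Finset.sum_eq_zero
          intro a _
          have ha1 : distMarg μ ∅ a = 1 := by
            show (∑ ω, if restr ∅ ω = a then μ ω else 0) = 1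
            rw [Finset.sum_congr rfl (fun ω _ => if_pos (restr_empty ω a))]
            exact hμ.2.1
          have ha2 : distMarg X.π ∅ a = 1 := by
            show (∑ ω, if restr ∅ ω = a then X.π ω else 0) = 1
            rw [Finset.sum_congr rfl (fun ω _ => if_pos (restr_empty ω a))]
            exact X.sum_one
          rw [ha1, ha2]
          simp
        rw [h1, hz, Finset.prod_range_zero]
        simp
      | succ j ih =>
        intro hj1
        have hjn : j < n := by omega
        have hη0 : 0 ≤ etaD X s j := hetaD0 j
        have hη1 : etaD X s j ≤ 1 := hetaD1 j
        have hPmj := ih (by omega)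
        have hKj := hmono (j+1)
        have hrec := hstep j hjn
        have hexp : KL (distMarg (muSeq X s μ j) (Pst s j)) (distMarg X.π (Pst s j))
              + (1 - etaD X s j) *
                (KL (muSeq X s μ (j+1)) X.π
                  - KL (distMarg (muSeq X s μ j) (Pst s j)) (distMarg X.π (Pst s j)))
            = (1 - etaD X s j) * KL (muSeq X s μ (j+1)) X.π
              + etaD X s j * KL (distMarg (muSeq X s μ j) (Pst s j)) (distMarg X.π (Pst s j)) := by
          ring
        rw [hexp] at hrec
        have h1 : (1 - etaD X s j) * KL (muSeq X s μ (j+1)) X.π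
            ≤ (1 - etaD X s j) * KL μ X.π :=
          mul_le_mul_of_nonneg_left hKj (by linarith)
        have h2 : etaD X s j * KL (distMarg (muSeq X s μ j) (Pst s j)) (distMarg X.π (Pst s j))
            ≤ etaD X s j * ((1 - ∏ m ∈ Finset.range j, etaD X s m) * KL μ X.π) :=
          mul_le_mul_of_nonneg_left hPmj hη0
        have hfin : (1 - etaD X s j) * KL μ X.π
              + etaD X s j * ((1 - ∏ m ∈ Finset.range j, etaD X s m) * KL μ X.π)
            = (1 - ∏ m ∈ Finset.range (j+1), etaD X s m) * KL μ X.π := by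
          rw [Finset.prod_range_succ]
          ring
        linarith
    -- final identification
    have hn1 : n - 1 < n := by omega
    have hfinal : KL (muSeq X s μ n) X.π
        = KL (distMarg (muSeq X s μ (n-1)) (Pst s (n-1))) (distMarg X.π (Pst s (n-1))) := by
      have hsucc : n - 1 + 1 = n := by omega
      calc KL (muSeq X s μ n) X.π = KL (muSeq X s μ ((n-1)+1)) X.π := by rw [hsucc]
        _ = KL (distMarg (muSeq X s μ (n-1)) ({s ⟨n-1, hn1⟩}ᶜ))
              (distMarg X.π ({s ⟨n-1, hn1⟩}ᶜ)) := hstepA (n-1) hn1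
        _ = _ := KL_distMarg_congr _ _ (idE s hn)
    have hprodeq : (∏ j ∈ Finset.univ.filter (fun j : Fin n => (j : ℕ) < n - 1),
        etaIJ X ((Finset.univ.filter fun k : Fin n => j < k).image fun k => s k) {s j})
        = ∏ m ∈ Finset.range (n-1), etaD X s m := by
      refine Finset.prod_bij' (fun (j : Fin n) _ => (j : ℕ))
        (fun (m : ℕ) (hm : m ∈ Finset.range (n-1)) =>
          (⟨m, by have := Finset.mem_range.mp hm; omega⟩ : Fin n)) ?_ ?_ ?_ ?_ ?_
      · intro a ha
        rw [Finset.mem_range]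
        exact (Finset.mem_filter.mp ha).2
      · intro m hm
        rw [Finset.mem_filter]
        refine ⟨Finset.mem_univ _, ?_⟩
        rw [Fin.val_mk]
        exact Finset.mem_range.mp hm
      · intro a ha
        exact Fin.eta a a.isLt
      · intro m hm
        rfl
      · intro a ha
        rw [etaD, dif_pos a.isLt]
        simp only [Fin.eta]
        rfl
    rw [← muSeq_eq_Psq X s μ, hprodeq, hfinal]
    exact hPm (n-1) (le_refl _)

end Final


theorem entropy_contraction_seq_sweep
    (X : WPC n U) (s : Equiv.Perm (Fin n)) :
    EC X (Psq X s) ≥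
      (∏ j ∈ Finset.univ.filter (fun j : Fin n => (j : ℕ) < n - 1),
        etaIJ X ((Finset.univ.filter fun k : Fin n => j < k).image fun k => s k) {s j}) ∧
    ∀ μ : (∀ i, U i) → ℝ, distOn (fun ω => ω ∈ X.Ω) μ →
      KL (Matrix.vecMul μ (Psq X s)) X.π ≤
        (1 - ∏ j ∈ Finset.univ.filter (fun j : Fin n => (j : ℕ) < n - 1),
          etaIJ X ((Finset.univ.filter fun k : Fin n => j < k).image fun k => s k) {s j}) *
          KL μ X.π := by
  constructor
  · rw [EC, ge_iff_le]
    have h1 : (∏ j ∈ Finset.univ.filter (fun j : Fin n => (j : ℕ) < n - 1),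
        etaIJ X ((Finset.univ.filter fun k : Fin n => j < k).image fun k => s k) {s j}) ≤ 1 :=
      Finset.prod_le_one (fun j _ => (etaIJ_bounds X _ _).1)
        (fun j _ => (etaIJ_bounds X _ _).2)
    have h2 : sSup { r : ℝ | ∃ μ : (∀ i, U i) → ℝ, distOn (fun ω => ω ∈ X.Ω) μ ∧
          KL μ X.π ≠ 0 ∧ r = KL (Matrix.vecMul μ (Psq X s)) X.π / KL μ X.π }
        ≤ 1 - ∏ j ∈ Finset.univ.filter (fun j : Fin n => (j : ℕ) < n - 1),
          etaIJ X ((Finset.univ.filter fun k : Fin n => j < k).image fun k => s k) {s j} := by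
      apply Real.sSup_le
      · rintro r ⟨μ, hdμ, hKL, rfl⟩
        have hpos : 0 < KL μ X.π := lt_of_le_of_ne (KL_mu_nonneg X μ hdμ) (Ne.symm hKL)
        rw [div_le_iff₀ hpos]
        exact main_ineq X s μ hdμ
      · linarith
    linarith
  · intro μ hdμ
    exact main_ineq X s μ hdμ

end PaperFormal
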